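/- arXiv:1811.02873 — 9 statements merged into one kernel-verified Lean document; each statement's English description precedes it below -/
import Mathlib

section
/- Let D ⊆ ℂ be a convex open set, f : D → ℂ analytic, and suppose there exists θ ∈ ℝ such that Im(e^{iθ} f'(z)) > 0 for all z ∈ D. Then f is injective on D. -/
open Complex Set

/-- Noshiro–Warschawski univalence criterion: if `f` is analytic on a convex open
set `D` and `Im (e^{iθ} f'(z)) > 0` on `D` for some real `θ`, then `f` is injective on `D`. -/
theorem noshiro_warschawski (D : Set ℂ) (hDconv : Convex ℝ D) (hDopen : IsOpen D)
    (f f' : ℂ → ℂ) (hf : ∀ z ∈ D, HasDerivAt f (f' z) z) (θ : ℝ)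
    (hθ : ∀ z ∈ D, 0 < (Complex.exp ((θ : ℂ) * Complex.I) * f' z).im) :
    Set.InjOn f D := by
  -- f' is continuous on D
  have hdiff : DifferentiableOn ℂ f D := fun z hz => ((hf z hz).differentiableAt).differentiableWithinAt
  have han : AnalyticOnNhd ℂ f D := hdiff.analyticOnNhd hDopen
  have hf'eq : ∀ z ∈ D, f' z = deriv f z := fun z hz => ((hf z hz).deriv).symm
  have hcont : ContinuousOn f' D := by
    have : ContinuousOn (deriv f) D := (han.deriv).continuousOn
    exact this.congr hf'eq
  intro z₀ hz₀ z₁ hz₁ hfeq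
  by_contra hne
  set L : ℝ → ℂ := fun t => z₀ + t • (z₁ - z₀) with hL
  have hLmem : ∀ t ∈ Set.Icc (0:ℝ) 1, L t ∈ D := by
    intro t ht
    have := hDconv.segment_subset hz₀ hz₁
    apply this
    rw [segment_eq_image']
    exact ⟨t, ht, rfl⟩
  have hLderiv : ∀ t : ℝ, HasDerivAt L (z₁ - z₀) t := by
    intro t
    have h := ((hasDerivAt_id t).smul_const (z₁ - z₀)).const_add z₀
    rw [one_smul] at h
    exact h
  have hgderiv : ∀ t ∈ Set.uIcc (0:ℝ) 1,
      HasDerivAt (fun t => f (L t)) ((z₁ - z₀) * f' (L t)) t := by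
    intro t ht
    rw [Set.uIcc_of_le zero_le_one] at ht
    have h1 : HasDerivAt f (f' (L t)) (L t) := hf _ (hLmem t ht)
    exact (HasDerivAt.scomp t h1 (hLderiv t))
  have hLcont : Continuous L := by
    apply continuous_const.add
    exact (continuous_id.smul continuous_const)
  have hcomp : ContinuousOn (fun t => f' (L t)) (Set.Icc (0:ℝ) 1) := by
    apply hcont.comp hLcont.continuousOn
    intro t ht; exact hLmem t ht
  have hint : IntervalIntegrable (fun t => f' (L t)) MeasureTheory.volume 0 1 := by
    apply ContinuousOn.intervalIntegrable
    rwa [Set.uIcc_of_le zero_le_one]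
  have hint2 : IntervalIntegrable (fun t => (z₁ - z₀) * f' (L t)) MeasureTheory.volume 0 1 :=
    hint.const_mul _
  have key : ∫ t in (0:ℝ)..1, (z₁ - z₀) * f' (L t) = f z₁ - f z₀ := by
    have := intervalIntegral.integral_eq_sub_of_hasDerivAt hgderiv hint2
    simpa [hL] using this
  have hzero : ∫ t in (0:ℝ)..1, f' (L t) = 0 := by
    have h1 : (z₁ - z₀) * ∫ t in (0:ℝ)..1, f' (L t) = 0 := by
      rw [← intervalIntegral.integral_const_mul, key, hfeq, sub_self]
    rcases mul_eq_zero.1 h1 with h | h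
    · exact absurd (sub_eq_zero.1 h).symm hne
    · exact h
  -- but the imaginary part of e^{iθ} * integral is positive
  set c : ℂ := Complex.exp ((θ : ℂ) * Complex.I) with hc
  have hint3 : IntervalIntegrable (fun t => c * f' (L t)) MeasureTheory.volume 0 1 :=
    hint.const_mul _
  have him : (∫ t in (0:ℝ)..1, c * f' (L t)).im = ∫ t in (0:ℝ)..1, (c * f' (L t)).im := by
    exact (Complex.imCLM.intervalIntegral_comp_comm hint3).symm
  have hpos : 0 < ∫ t in (0:ℝ)..1, (c * f' (L t)).im := by
    apply intervalIntegral.intervalIntegral_pos_of_pos_on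
    · exact (Complex.continuous_im.comp_continuousOn
        (continuousOn_const.mul hcomp)).intervalIntegrable_of_Icc zero_le_one
    · intro t ht
      exact hθ _ (hLmem t ⟨le_of_lt ht.1, le_of_lt ht.2⟩)
    · exact zero_lt_one
  rw [← him, intervalIntegral.integral_const_mul, hzero, mul_zero] at hpos
  simp at hpos
end

section
/- Let μ be a Borel probability measure on ℝ with a finite first moment m = ∫ x dμ(x), and let F_μ(z) = 1/G_μ(z) where G_μ(z) = ∫ 1/(z−x) dμ(x) for z ∈ ℂ⁺. Then m = lim_{y→∞} (iy − F_μ(iy)). -/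
open MeasureTheory Complex Filter

lemma fml_aux_ne (y : ℝ) (hy : 0 < y) (x : ℝ) : ((y : ℂ) * Complex.I - (x : ℂ)) ≠ 0 := by
  intro h
  have h2 := congrArg Complex.im h
  simp at h2
  linarith

lemma fml_aux_norm (y : ℝ) (hy : 0 < y) (x : ℝ) : y ≤ ‖(y : ℂ) * Complex.I - (x : ℂ)‖ := by
  have h := Complex.abs_im_le_norm ((y : ℂ) * Complex.I - (x : ℂ))
  simp [abs_of_pos hy] at h
  simpa using h

lemma fml_bound1 (y x : ℝ) (hy : 0 < y) :
    ‖(y : ℂ) * Complex.I * ((y : ℂ) * Complex.I - (x : ℂ))⁻¹‖ ≤ 1 := by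
  have hpos : (0:ℝ) < ‖(y : ℂ) * Complex.I - (x : ℂ)‖ := lt_of_lt_of_le hy (fml_aux_norm y hy x)
  rw [norm_mul, norm_inv, ← div_eq_mul_inv, div_le_one hpos]
  calc ‖(y : ℂ) * Complex.I‖ = y := by simp [abs_of_pos hy]
    _ ≤ _ := fml_aux_norm y hy x

lemma fml_bound2 (y x : ℝ) (hy : 0 < y) :
    ‖(y : ℂ) * Complex.I * (x : ℂ) * ((y : ℂ) * Complex.I - (x : ℂ))⁻¹‖ ≤ |x| := by
  have hpos : (0:ℝ) < ‖(y : ℂ) * Complex.I - (x : ℂ)‖ := lt_of_lt_of_le hy (fml_aux_norm y hy x)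
  rw [norm_mul, norm_mul, norm_inv]
  have h1 : ‖(y : ℂ) * Complex.I‖ = y := by simp [abs_of_pos hy]
  have h2 : ‖(x : ℂ)‖ = |x| := by simp
  rw [h1, h2]
  calc y * |x| * ‖(y : ℂ) * Complex.I - (x : ℂ)‖⁻¹
      ≤ y * |x| * y⁻¹ := by
        gcongr
        exact fml_aux_norm y hy x
    _ = |x| := by field_simp
  
lemma fml_est1 (y x : ℝ) (hy : 0 < y) :
    ‖(y : ℂ) * Complex.I * ((y : ℂ) * Complex.I - (x : ℂ))⁻¹ - 1‖ ≤ |x| / y := by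
  have hne := fml_aux_ne y hy x
  have heq : (y : ℂ) * Complex.I * ((y : ℂ) * Complex.I - (x : ℂ))⁻¹ - 1
      = (x : ℂ) * ((y : ℂ) * Complex.I - (x : ℂ))⁻¹ := by
    field_simp
    ring
  rw [heq, norm_mul, norm_inv]
  have h2 : ‖(x : ℂ)‖ = |x| := by simp
  rw [h2, div_eq_mul_inv]
  gcongr
  exact fml_aux_norm y hy x

lemma fml_est2 (y x : ℝ) (hy : 0 < y) :
    ‖(y : ℂ) * Complex.I * (x : ℂ) * ((y : ℂ) * Complex.I - (x : ℂ))⁻¹ - (x : ℂ)‖ ≤ x ^ 2 / y := by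
  have hne := fml_aux_ne y hy x
  have heq : (y : ℂ) * Complex.I * (x : ℂ) * ((y : ℂ) * Complex.I - (x : ℂ))⁻¹ - (x : ℂ)
      = (x : ℂ) ^ 2 * ((y : ℂ) * Complex.I - (x : ℂ))⁻¹ := by
    field_simp
    ring
  rw [heq, norm_mul, norm_inv]
  have h2 : ‖(x : ℂ) ^ 2‖ = x ^ 2 := by
    rw [norm_pow]
    simp [sq_abs]
  rw [h2, div_eq_mul_inv]
  gcongr
  exact fml_aux_norm y hy x

lemma fml_cont1 (y : ℝ) (hy : 0 < y) :
    Continuous fun x : ℝ => (y : ℂ) * Complex.I * ((y : ℂ) * Complex.I - (x : ℂ))⁻¹ :=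
  continuous_const.mul ((continuous_const.sub Complex.continuous_ofReal).inv₀
    fun x => fml_aux_ne y hy x)

lemma fml_cont2 (y : ℝ) (hy : 0 < y) :
    Continuous fun x : ℝ => (y : ℂ) * Complex.I * (x : ℂ) * ((y : ℂ) * Complex.I - (x : ℂ))⁻¹ :=
  (continuous_const.mul Complex.continuous_ofReal).mul
    ((continuous_const.sub Complex.continuous_ofReal).inv₀ fun x => fml_aux_ne y hy x)

lemma fml_tendsto_D (μ : Measure ℝ) [IsProbabilityMeasure μ] :
    Tendsto (fun y : ℝ => ∫ x : ℝ, (y : ℂ) * Complex.I * ((y : ℂ) * Complex.I - (x : ℂ))⁻¹ ∂μ)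
      atTop (nhds 1) := by
  have h1 : (1 : ℂ) = ∫ _ : ℝ, (1 : ℂ) ∂μ := by simp
  rw [h1]
  apply tendsto_integral_filter_of_dominated_convergence (fun _ => (1 : ℝ))
  · filter_upwards [eventually_gt_atTop (0:ℝ)] with y hy
    exact (fml_cont1 y hy).aestronglyMeasurable
  · filter_upwards [eventually_gt_atTop (0:ℝ)] with y hy
    exact ae_of_all _ fun x => fml_bound1 y x hy
  · exact integrable_const 1
  · refine ae_of_all _ fun x => ?_
    rw [tendsto_iff_norm_sub_tendsto_zero]
    apply squeeze_zero' (Eventually.of_forall fun y => norm_nonneg _)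
      (g := fun y : ℝ => |x| / y)
    · filter_upwards [eventually_gt_atTop (0:ℝ)] with y hy
      exact fml_est1 y x hy
    · exact Tendsto.const_div_atTop tendsto_id |x|

lemma fml_tendsto_N (μ : Measure ℝ) [IsProbabilityMeasure μ]
    (hint : Integrable (fun x : ℝ => x) μ) :
    Tendsto (fun y : ℝ =>
        ∫ x : ℝ, (y : ℂ) * Complex.I * (x : ℂ) * ((y : ℂ) * Complex.I - (x : ℂ))⁻¹ ∂μ)
      atTop (nhds ((∫ x : ℝ, x ∂μ : ℝ) : ℂ)) := by
  have h1 : ((∫ x : ℝ, x ∂μ : ℝ) : ℂ) = ∫ x : ℝ, (x : ℂ) ∂μ := (integral_ofReal).symm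
  rw [h1]
  apply tendsto_integral_filter_of_dominated_convergence (fun x => |x|)
  · filter_upwards [eventually_gt_atTop (0:ℝ)] with y hy
    exact (fml_cont2 y hy).aestronglyMeasurable
  · filter_upwards [eventually_gt_atTop (0:ℝ)] with y hy
    exact ae_of_all _ fun x => fml_bound2 y x hy
  · exact hint.abs
  · refine ae_of_all _ fun x => ?_
    rw [tendsto_iff_norm_sub_tendsto_zero]
    apply squeeze_zero' (Eventually.of_forall fun y => norm_nonneg _)
      (g := fun y : ℝ => x ^ 2 / y)
    · filter_upwards [eventually_gt_atTop (0:ℝ)] with y hy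
      exact fml_est2 y x hy
    · exact Tendsto.const_div_atTop tendsto_id (x ^ 2)

/-- If a probability measure `μ` on `ℝ` has a finite first moment `m = ∫ x dμ(x)`,
then `m = lim_{y → ∞} (iy - F_μ(iy))`, where `F_μ = 1/G_μ` is the reciprocal
Cauchy transform. -/
theorem first_moment_limit (μ : Measure ℝ) [IsProbabilityMeasure μ]
    (hint : Integrable (fun x : ℝ => x) μ) :
    Tendsto (fun y : ℝ =>
        (y : ℂ) * Complex.I - (∫ x : ℝ, ((y : ℂ) * Complex.I - (x : ℂ))⁻¹ ∂μ)⁻¹)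
      atTop (nhds ((∫ x : ℝ, x ∂μ : ℝ) : ℂ)) := by
  have hD := fml_tendsto_D μ
  have hN := fml_tendsto_N μ hint
  have hdiv := hN.div hD one_ne_zero
  rw [div_one] at hdiv
  refine hdiv.congr' ?_
  filter_upwards [eventually_gt_atTop (0:ℝ), hD.eventually_ne one_ne_zero] with y hy hD0
  set D : ℂ := ∫ x : ℝ, (y : ℂ) * Complex.I * ((y : ℂ) * Complex.I - (x : ℂ))⁻¹ ∂μ with hDdef
  set G : ℂ := ∫ x : ℝ, ((y : ℂ) * Complex.I - (x : ℂ))⁻¹ ∂μ with hGdef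
  have hiy : (y : ℂ) * Complex.I ≠ 0 := by
    simp [Complex.ext_iff]
    exact ne_of_gt hy
  -- D = iy * G
  have hDG : D = (y : ℂ) * Complex.I * G := by
    rw [hDdef, hGdef, integral_const_mul]
  -- integrability of the integrands
  have hint1 : Integrable (fun x : ℝ => (y : ℂ) * Complex.I * ((y : ℂ) * Complex.I - (x : ℂ))⁻¹) μ := by
    refine Integrable.mono' (integrable_const (1 : ℝ)) (fml_cont1 y hy).aestronglyMeasurable ?_
    exact ae_of_all _ fun x => fml_bound1 y x hy
  -- N = iy * D - iy
  have hN_eq : (∫ x : ℝ, (y : ℂ) * Complex.I * (x : ℂ) * ((y : ℂ) * Complex.I - (x : ℂ))⁻¹ ∂μ)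
      = (y : ℂ) * Complex.I * D - (y : ℂ) * Complex.I := by
    have hpt : ∀ x : ℝ, (y : ℂ) * Complex.I * (x : ℂ) * ((y : ℂ) * Complex.I - (x : ℂ))⁻¹
        = (y : ℂ) * Complex.I * ((y : ℂ) * Complex.I * ((y : ℂ) * Complex.I - (x : ℂ))⁻¹)
          - (y : ℂ) * Complex.I := by
      intro x
      have hne := fml_aux_ne y hy x
      field_simp
      ring
    rw [integral_congr_ae (ae_of_all _ hpt), integral_sub (hint1.const_mul _) (integrable_const _),
      integral_const_mul, integral_const]
    simp [hDdef]
  have hG0 : G ≠ 0 := fun h => hD0 (by rw [hDG, h, mul_zero])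
  simp only [Pi.div_apply]
  rw [← hDdef, hN_eq, hDG]
  have hy0 : (y : ℂ) ≠ 0 := by exact_mod_cast hy.ne'
  field_simp
end

section
/- The complex linear span of the functions x ↦ 1/(z − x) for z ∈ ℂ∖ℝ is dense (in the uniform norm) in C₀(ℝ), the space of continuous functions f : ℝ → ℂ with f(x) → 0 as x → ±∞. -/
open Complex Finset

open scoped ZeroAtInfty

namespace CauchyDense

open Filter Topology OnePoint

noncomputable section

lemma sub_ofReal_ne_zero {z : ℂ} (hz : z.im ≠ 0) (x : ℝ) : z - (x : ℂ) ≠ 0 := by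
  intro h
  apply hz
  have := congrArg Complex.im h
  simpa using this

lemma tendsto_kernel (z : ℂ) :
    Tendsto (fun x : ℝ => (z - (x : ℂ))⁻¹) (coclosedCompact ℝ) (𝓝 0) := by
  rw [Filter.coclosedCompact_eq_cocompact]
  have h1 : Tendsto (fun x : ℝ => ‖z - (x : ℂ)‖) (cocompact ℝ) atTop := by
    have h2 : Tendsto (fun x : ℝ => ‖x‖ + -‖z‖) (cocompact ℝ) atTop :=
      tendsto_atTop_add_const_right _ _ tendsto_norm_cocompact_atTop
    refine tendsto_atTop_mono (fun x => ?_) h2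
    have h3 : ‖(x : ℂ)‖ - ‖z‖ ≤ ‖(x : ℂ) - z‖ := norm_sub_norm_le _ _
    rw [norm_sub_rev] at h3
    have h4 : ‖(x : ℂ)‖ = ‖x‖ := by simp
    linarith
  rw [tendsto_zero_iff_norm_tendsto_zero]
  simpa [norm_inv, Pi.inv_def] using h1.inv_tendsto_atTop

/-- The Cauchy kernel extended to the one-point compactification. -/
def gk (z : ℂ) (hz : z.im ≠ 0) : C(OnePoint ℝ, ℂ) :=
  OnePoint.continuousMapMk
    ⟨fun x : ℝ => (z - (x : ℂ))⁻¹,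
      ((continuous_const.sub Complex.continuous_ofReal).inv₀ (sub_ofReal_ne_zero hz))⟩
    0 (tendsto_kernel z)

@[simp] lemma gk_apply_coe (z : ℂ) (hz : z.im ≠ 0) (x : ℝ) :
    gk z hz (x : OnePoint ℝ) = (z - (x : ℂ))⁻¹ := rfl

@[simp] lemma gk_apply_infty (z : ℂ) (hz : z.im ≠ 0) : gk z hz ∞ = 0 := rfl

/-- The set of Cauchy kernels. -/
def S : Set C(OnePoint ℝ, ℂ) := {g | ∃ z : ℂ, ∃ hz : z.im ≠ 0, g = gk z hz}

/-- The closure of the span of the Cauchy kernels. -/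
def M : Submodule ℂ C(OnePoint ℝ, ℂ) := (Submodule.span ℂ S).topologicalClosure

lemma norm_gk_sub_gk_le (z w : ℂ) (hz : z.im ≠ 0) (hw : w.im ≠ 0) :
    ‖gk w hw - gk z hz‖ ≤ ‖w - z‖ / (|w.im| * |z.im|) := by
  have hden : 0 < |w.im| * |z.im| :=
    mul_pos (abs_pos.mpr hw) (abs_pos.mpr hz)
  rw [ContinuousMap.norm_le _ (div_nonneg (norm_nonneg _) hden.le)]
  intro p
  induction p using OnePoint.rec with
  | infty => simpa using div_nonneg (norm_nonneg _) hden.le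
  | coe x =>
    have ha := sub_ofReal_ne_zero hw x
    have hb := sub_ofReal_ne_zero hz x
    have key : (w - (x : ℂ))⁻¹ - (z - (x : ℂ))⁻¹ =
        (z - w) / ((w - (x : ℂ)) * (z - (x : ℂ))) := by
      field_simp
      ring
    simp only [ContinuousMap.sub_apply, gk_apply_coe, key]
    rw [norm_div, norm_mul]
    rw [show ‖z - w‖ = ‖w - z‖ by rw [norm_sub_rev]]
    gcongr
    · calc |w.im| = |(w - (x : ℂ)).im| := by simp
        _ ≤ ‖w - (x : ℂ)‖ := Complex.abs_im_le_norm _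
    · calc |z.im| = |(z - (x : ℂ)).im| := by simp
        _ ≤ ‖z - (x : ℂ)‖ := Complex.abs_im_le_norm _

lemma gk_mul_eq (z w : ℂ) (hz : z.im ≠ 0) (hw : w.im ≠ 0) (hzw : w ≠ z) :
    gk z hz * gk w hw = (w - z)⁻¹ • (gk z hz - gk w hw) := by
  ext p
  induction p using OnePoint.rec with
  | infty => simp
  | coe x =>
    have ha := sub_ofReal_ne_zero hz x
    have hb := sub_ofReal_ne_zero hw x
    have hwz : w - z ≠ 0 := sub_ne_zero.mpr hzw
    simp only [ContinuousMap.mul_apply, ContinuousMap.smul_apply, ContinuousMap.sub_apply,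
      gk_apply_coe, smul_eq_mul]
    field_simp
    ring

lemma gk_mem_span (z : ℂ) (hz : z.im ≠ 0) : gk z hz ∈ Submodule.span ℂ S :=
  Submodule.subset_span ⟨z, hz, rfl⟩

lemma span_le_M : Submodule.span ℂ S ≤ M := Submodule.le_topologicalClosure _

lemma gk_mul_gk_mem (z w : ℂ) (hz : z.im ≠ 0) (hw : w.im ≠ 0) :
    gk z hz * gk w hw ∈ M := by
  by_cases h : w = z
  · subst h
    -- approximate gk w ^ 2 by gk w * gk (w + 1/(n+1))
    set wn : ℕ → ℂ := fun n => w + (((n : ℝ) + 1)⁻¹ : ℝ) with hwn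
    have him : ∀ n, (wn n).im = w.im := fun n => by simp [hwn]
    have hwim : ∀ n, (wn n).im ≠ 0 := fun n => by rw [him]; exact hw
    have hne : ∀ n, wn n ≠ w := by
      intro n hcontra
      have : ((((n : ℝ) + 1)⁻¹ : ℝ) : ℂ) = 0 := by
        have := congrArg (fun t => t - w) hcontra
        simpa [hwn] using this
      rw [Complex.ofReal_eq_zero] at this
      exact (by positivity : (0:ℝ) < ((n : ℝ) + 1)⁻¹).ne' this
    have hmem : ∀ n, gk w hw * gk (wn n) (hwim n) ∈ (Submodule.span ℂ S : Set _) := by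
      intro n
      rw [gk_mul_eq w (wn n) hw (hwim n) (hne n)]
      exact Submodule.smul_mem _ _ (Submodule.sub_mem _ (gk_mem_span _ _) (gk_mem_span _ _))
    have hconv : Tendsto (fun n => gk (wn n) (hwim n)) atTop (𝓝 (gk w hw)) := by
      rw [tendsto_iff_dist_tendsto_zero]
      have hb : ∀ n, dist (gk (wn n) (hwim n)) (gk w hw) ≤
          ((n : ℝ) + 1)⁻¹ / (|w.im| * |w.im|) := by
        intro n
        rw [dist_eq_norm]
        have h1 := norm_gk_sub_gk_le w (wn n) hw (hwim n)
        have habs : ‖wn n - w‖ = ((n : ℝ) + 1)⁻¹ := by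
          have : wn n - w = ((((n : ℝ) + 1)⁻¹ : ℝ) : ℂ) := by rw [hwn]; ring
          rw [this, Complex.norm_real, Real.norm_eq_abs, abs_of_pos (by positivity)]
        rw [him n, habs] at h1
        exact h1
      refine squeeze_zero (fun n => dist_nonneg) hb ?_
      have h0 : Tendsto (fun n : ℕ => ((n : ℝ) + 1)⁻¹) atTop (𝓝 0) :=
        tendsto_one_div_add_atTop_nhds_zero_nat.congr (fun n => by rw [one_div])
      simpa using h0.div_const (|w.im| * |w.im|)
    have hmul : Tendsto (fun n => gk w hw * gk (wn n) (hwim n)) atTop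
        (𝓝 (gk w hw * gk w hw)) := tendsto_const_nhds.mul hconv
    have : gk w hw * gk w hw ∈ closure (Submodule.span ℂ S : Set _) :=
      mem_closure_of_tendsto hmul (Filter.Eventually.of_forall hmem)
    exact this
  · rw [gk_mul_eq z w hz hw h]
    exact M.smul_mem _ (M.sub_mem (span_le_M (gk_mem_span _ _)) (span_le_M (gk_mem_span _ _)))

lemma M_isClosed : IsClosed (M : Set C(OnePoint ℝ, ℂ)) :=
  Submodule.isClosed_topologicalClosure _

lemma mul_mem_M {a b : C(OnePoint ℝ, ℂ)} (ha : a ∈ M) (hb : b ∈ M) : a * b ∈ M := by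
  have key1 : ∀ g ∈ S, ∀ b ∈ Submodule.span ℂ S, g * b ∈ M := by
    rintro g hg b hb
    induction hb using Submodule.span_induction with
    | mem y hy =>
      obtain ⟨z, hz, rfl⟩ := hg
      obtain ⟨w, hw, rfl⟩ := hy
      exact gk_mul_gk_mem z w hz hw
    | zero => rw [mul_zero]; exact M.zero_mem
    | add u v _ _ ihu ihv => rw [mul_add]; exact M.add_mem ihu ihv
    | smul c u _ ihu => rw [mul_smul_comm]; exact M.smul_mem _ ihu
  have key2 : ∀ a ∈ Submodule.span ℂ S, ∀ b ∈ Submodule.span ℂ S, a * b ∈ M := by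
    rintro a ha b hb
    induction ha using Submodule.span_induction with
    | mem y hy => exact key1 y hy b hb
    | zero => rw [zero_mul]; exact M.zero_mem
    | add u v _ _ ihu ihv => rw [add_mul]; exact M.add_mem ihu ihv
    | smul c u _ ihu => rw [smul_mul_assoc]; exact M.smul_mem _ ihu
  have key3 : ∀ a ∈ Submodule.span ℂ S, ∀ b ∈ M, a * b ∈ M := by
    rintro a ha b hb
    have : a * b ∈ closure (M : Set C(OnePoint ℝ, ℂ)) :=
      map_mem_closure (continuous_mul_left a) hb (fun y hy => key2 a ha y hy)
    rwa [M_isClosed.closure_eq] at this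
  have : a * b ∈ closure (M : Set C(OnePoint ℝ, ℂ)) :=
    map_mem_closure (f := fun y => y * b) (continuous_mul_right b) ha
      (fun y hy => key3 y hy b hb)
  rwa [M_isClosed.closure_eq] at this

lemma star_gk (z : ℂ) (hz : z.im ≠ 0) :
    star (gk z hz) = gk (starRingEnd ℂ z) (by simpa using hz) := by
  ext p
  induction p using OnePoint.rec with
  | infty => simp
  | coe x =>
    simp only [ContinuousMap.star_apply, gk_apply_coe, ← map_inv₀]
    rw [Complex.star_def, map_inv₀, map_sub, Complex.conj_ofReal]

lemma star_mem_M {a : C(OnePoint ℝ, ℂ)} (ha : a ∈ M) : star a ∈ M := by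
  have hspan : ∀ b ∈ Submodule.span ℂ S, star b ∈ Submodule.span ℂ S := by
    intro b hb
    induction hb using Submodule.span_induction with
    | mem y hy =>
      obtain ⟨z, hz, rfl⟩ := hy
      rw [star_gk]
      exact gk_mem_span _ _
    | zero => rw [star_zero]; exact Submodule.zero_mem _
    | add u v _ _ ihu ihv => rw [star_add]; exact Submodule.add_mem _ ihu ihv
    | smul c u _ ihu =>
      rw [star_smul]
      exact Submodule.smul_mem _ _ ihu
  exact map_mem_closure continuous_star ha hspan

lemma eval_infty_eq_zero_of_mem_M {h : C(OnePoint ℝ, ℂ)} (hh : h ∈ M) : h ∞ = 0 := by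
  have hspan : (Submodule.span ℂ S : Set C(OnePoint ℝ, ℂ)) ⊆ {g | g ∞ = 0} := by
    intro b hb
    induction hb using Submodule.span_induction with
    | mem y hy => obtain ⟨z, hz, rfl⟩ := hy; simp
    | zero => simp
    | add u v _ _ ihu ihv =>
      simp only [Set.mem_setOf_eq, ContinuousMap.add_apply] at *
      rw [ihu, ihv, add_zero]
    | smul c u _ ihu =>
      simp only [Set.mem_setOf_eq, ContinuousMap.smul_apply] at *
      rw [ihu, smul_zero]
  have hclosed : IsClosed {g : C(OnePoint ℝ, ℂ) | g ∞ = 0} :=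
    isClosed_eq (continuous_eval_const ∞) continuous_const
  exact closure_minimal hspan hclosed hh

/-- The star subalgebra of constants plus (closure of span of) Cauchy kernels. -/
def T : StarSubalgebra ℂ C(OnePoint ℝ, ℂ) where
  carrier := {g | ∃ c : ℂ, ∃ h ∈ M, g = c • 1 + h}
  mul_mem' := by
    rintro a b ⟨c, h, hh, rfl⟩ ⟨d, k, hk, rfl⟩
    refine ⟨c * d, c • k + d • h + h * k,
      M.add_mem (M.add_mem (M.smul_mem _ hk) (M.smul_mem _ hh)) (mul_mem_M hh hk), ?_⟩
    simp only [add_mul, mul_add, smul_mul_assoc, mul_smul_comm, one_mul, mul_one]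
    module
  one_mem' := ⟨1, 0, M.zero_mem, by simp⟩
  add_mem' := by
    rintro a b ⟨c, h, hh, rfl⟩ ⟨d, k, hk, rfl⟩
    refine ⟨c + d, h + k, M.add_mem hh hk, ?_⟩
    rw [add_smul]
    abel
  zero_mem' := ⟨0, 0, M.zero_mem, by simp⟩
  algebraMap_mem' := fun r => ⟨r, 0, M.zero_mem, by
    simp [Algebra.algebraMap_eq_smul_one]⟩
  star_mem' := by
    rintro a ⟨c, h, hh, rfl⟩
    exact ⟨starRingEnd ℂ c, star h, star_mem_M hh, by simp [star_add, star_smul]⟩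

lemma gI_mem_T : gk Complex.I (by simp) ∈ T :=
  ⟨0, gk Complex.I (by simp), span_le_M (gk_mem_span Complex.I (by simp)), by simp⟩

lemma T_separatesPoints : T.SeparatesPoints := by
  intro x y hxy
  refine ⟨_, ⟨gk Complex.I (by simp), gI_mem_T, rfl⟩, ?_⟩
  induction x using OnePoint.rec with
  | infty =>
    induction y using OnePoint.rec with
    | infty => exact absurd rfl hxy
    | coe b =>
      simp only [gk_apply_infty, gk_apply_coe]
      exact fun h => (inv_ne_zero (sub_ofReal_ne_zero (by simp) b)) h.symm
  | coe a =>
    induction y using OnePoint.rec with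
    | infty =>
      simp only [gk_apply_infty, gk_apply_coe]
      exact inv_ne_zero (sub_ofReal_ne_zero (by simp) a)
    | coe b =>
      simp only [gk_apply_coe]
      intro h
      apply hxy
      have := inv_injective h
      have hab : (a : ℂ) = (b : ℂ) := by linear_combination -this
      norm_cast at hab
      rw [hab]

end

end CauchyDense

open CauchyDense Filter Topology OnePoint

/-- The complex linear span of the Cauchy kernels `x ↦ 1/(z - x)`, for `z ∈ ℂ \ ℝ`,
is dense in `C₀(ℝ, ℂ)` with respect to the uniform norm. -/
theorem cauchy_kernels_dense (f : C₀(ℝ, ℂ)) (ε : ℝ) (hε : 0 < ε) :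
    ∃ (n : ℕ) (c : Fin n → ℂ) (z : Fin n → ℂ), (∀ i, (z i).im ≠ 0) ∧
      ∀ x : ℝ, ‖f x - ∑ i, c i * (z i - (x : ℂ))⁻¹‖ < ε := by
  classical
  let F : C(OnePoint ℝ, ℂ) := OnePoint.continuousMapMk f.toContinuousMap 0
    (by rw [Filter.coclosedCompact_eq_cocompact]
        exact zero_at_infty f)
  have hFcoe : ∀ x : ℝ, F (x : OnePoint ℝ) = f x := fun x => rfl
  have hFinf : F ∞ = 0 := rfl
  have htop :=
    ContinuousMap.starSubalgebra_topologicalClosure_eq_top_of_separatesPoints T T_separatesPoints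
  have hF : F ∈ closure (T : Set C(OnePoint ℝ, ℂ)) := by
    rw [← StarSubalgebra.topologicalClosure_coe, htop]
    trivial
  rw [Metric.mem_closure_iff] at hF
  obtain ⟨p, hpT, hp⟩ := hF (ε / 2) (by positivity)
  obtain ⟨c0, h, hhM, rfl⟩ := hpT
  rw [dist_eq_norm] at hp
  have hc0 : ‖c0‖ < ε / 2 := by
    have h2 : ‖(F - (c0 • 1 + h)) ∞‖ ≤ ‖F - (c0 • 1 + h)‖ :=
      ContinuousMap.norm_coe_le_norm _ _
    have h3 : (F - (c0 • 1 + h)) ∞ = -c0 := by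
      simp [hFinf, eval_infty_eq_zero_of_mem_M hhM]
    rw [h3, norm_neg] at h2
    exact lt_of_le_of_lt h2 hp
  have hFh : ‖F - h‖ < ε := by
    have he : F - h = (F - (c0 • 1 + h)) + c0 • 1 := by abel
    have hn1 : ‖c0 • (1 : C(OnePoint ℝ, ℂ))‖ = ‖c0‖ := by
      rw [norm_smul, norm_one, mul_one]
    calc ‖F - h‖ ≤ ‖F - (c0 • 1 + h)‖ + ‖c0 • (1 : C(OnePoint ℝ, ℂ))‖ :=
          he ▸ norm_add_le _ _
      _ < ε / 2 + ε / 2 := by rw [hn1]; exact add_lt_add hp hc0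
      _ = ε := by ring
  have hh' : h ∈ closure (Submodule.span ℂ S : Set C(OnePoint ℝ, ℂ)) := hhM
  rw [Metric.mem_closure_iff] at hh'
  obtain ⟨s, hs, hdist⟩ := hh' (ε - ‖F - h‖) (by linarith)
  rw [dist_eq_norm] at hdist
  have hFs : ‖F - s‖ < ε := by
    calc ‖F - s‖ = ‖(F - h) + (h - s)‖ := by abel_nf
      _ ≤ ‖F - h‖ + ‖h - s‖ := norm_add_le _ _
      _ < ε := by linarith
  obtain ⟨n, c, g, hsum⟩ := Submodule.mem_span_set'.mp hs
  choose z hz hgk using fun i => (g i).2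
  refine ⟨n, c, z, hz, fun x => ?_⟩
  have hsx : s (x : OnePoint ℝ) = ∑ i, c i * (z i - (x : ℂ))⁻¹ := by
    rw [← hsum]
    simp only [ContinuousMap.coe_sum, Finset.sum_apply, ContinuousMap.coe_smul, Pi.smul_apply,
      smul_eq_mul, hgk, gk_apply_coe]
  have hpt := ContinuousMap.norm_coe_le_norm (F - s) (x : OnePoint ℝ)
  calc ‖f x - ∑ i, c i * (z i - (x : ℂ))⁻¹‖ = ‖(F - s) (x : OnePoint ℝ)‖ := by
        rw [ContinuousMap.sub_apply, hFcoe, hsx]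
    _ ≤ ‖F - s‖ := hpt
    _ < ε := hFs
end

section
/- The complex linear span of the constant function 1 together with the functions x ↦ zx/(1 − zx) for z ∈ ℂ with |z| ≠ 1, restricted to the unit circle 𝕋 = {x ∈ ℂ : |x| = 1}, is dense in C(𝕋) with respect to the uniform norm. -/
open Complex Finset

noncomputable section

def Complex.abs : AbsoluteValue ℂ ℝ where
  toFun := fun z => ‖z‖
  map_mul' := norm_mul
  nonneg' := norm_nonneg
  eq_zero' := fun _ => norm_eq_zero
  add_le' := norm_add_le

lemma Complex.norm_eq_abs (z : ℂ) : ‖z‖ = Complex.abs z := rfl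

@[simp] lemma Complex.abs_conj (z : ℂ) : Complex.abs ((starRingEnd ℂ) z) = Complex.abs z :=
  Complex.norm_conj z

@[simp] lemma Complex.abs_ofReal (r : ℝ) : Complex.abs (r : ℂ) = |r| :=
  Complex.norm_real r

namespace CircleKernels

local notation "X" => Metric.sphere (0 : ℂ) 1

lemma abs_x (x : X) : Complex.abs (x : ℂ) = 1 := by
  have := mem_sphere_zero_iff_norm.mp x.2
  exact this

lemma x_ne (x : X) : (x : ℂ) ≠ 0 := by
  intro h
  have := abs_x x
  rw [h] at this
  simp at this

lemma den_ne {z : ℂ} (hz : Complex.abs z ≠ 1) (x : X) : 1 - z * (x : ℂ) ≠ 0 := by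
  intro h
  apply hz
  have : z * (x : ℂ) = 1 := by linear_combination -h
  have := congrArg Complex.abs this
  rwa [map_mul, abs_x, mul_one, map_one] at this

lemma den_lb {z : ℂ} (x : X) : |Complex.abs z - 1| ≤ Complex.abs (1 - z * (x : ℂ)) := by
  have h := Complex.abs.abs_abv_sub_le_abv_sub (z * (x : ℂ)) 1
  rw [map_one, map_mul, abs_x, mul_one] at h
  calc |Complex.abs z - 1| ≤ Complex.abs (z * (x : ℂ) - 1) := h
    _ = Complex.abs (1 - z * (x : ℂ)) := by rw [← Complex.abs.map_neg]; ring_nf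

lemma den_pos {z : ℂ} (hz : Complex.abs z ≠ 1) : 0 < |Complex.abs z - 1| :=
  abs_pos.mpr (sub_ne_zero.mpr hz)

def kernel (z : ℂ) (hz : Complex.abs z ≠ 1) : C(X, ℂ) :=
  ⟨fun x => z * (x : ℂ) / (1 - z * (x : ℂ)), by
    apply Continuous.div
    · exact continuous_const.mul continuous_subtype_val
    · exact continuous_const.sub (continuous_const.mul continuous_subtype_val)
    · exact fun x => den_ne hz x⟩

lemma kernel_apply (z : ℂ) (hz : Complex.abs z ≠ 1) (x : X) :
    kernel z hz x = z * (x : ℂ) / (1 - z * (x : ℂ)) := rfl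

def K : Set C(X, ℂ) := {g | ∃ z, ∃ hz : Complex.abs z ≠ 1, g = kernel z hz}

def S : Submodule ℂ C(X, ℂ) := Submodule.span ℂ (insert 1 K)

lemma one_mem_S : (1 : C(X, ℂ)) ∈ S :=
  Submodule.subset_span (Set.mem_insert _ _)

lemma kernel_mem_S (z : ℂ) (hz : Complex.abs z ≠ 1) : kernel z hz ∈ S :=
  Submodule.subset_span (Set.mem_insert_of_mem _ ⟨z, hz, rfl⟩)

lemma kernel_zero (h : Complex.abs (0 : ℂ) ≠ 1) : kernel 0 h = 0 := by
  ext x; simp [kernel_apply]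

lemma abs_inv_conj {z : ℂ} (hz : Complex.abs z ≠ 1) :
    Complex.abs ((starRingEnd ℂ) z)⁻¹ ≠ 1 := by
  rw [map_inv₀, Complex.abs_conj]
  intro h
  apply hz
  rw [← inv_inv (Complex.abs z), h]
  norm_num

/-- star of a kernel is in the span -/
lemma star_kernel_mem (z : ℂ) (hz : Complex.abs z ≠ 1) : star (kernel z hz) ∈ S := by
  rcases eq_or_ne z 0 with rfl | hz0
  · rw [kernel_zero hz]
    simpa using S.zero_mem
  have key : star (kernel z hz) = -1 - kernel ((starRingEnd ℂ) z)⁻¹ (abs_inv_conj hz) := by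
    ext x
    simp only [ContinuousMap.sub_apply, ContinuousMap.neg_apply, ContinuousMap.one_apply,
      ContinuousMap.star_apply, kernel_apply]
    have hx1 : Complex.abs (x : ℂ) = 1 := abs_x x
    have hd1 : 1 - z * (x : ℂ) ≠ 0 := den_ne hz x
    have hd2 : 1 - ((starRingEnd ℂ) z)⁻¹ * (x : ℂ) ≠ 0 := den_ne (abs_inv_conj hz) x
    set x' : ℂ := (x : ℂ)
    have hx0 : x' ≠ 0 := x_ne x
    have hx : (starRingEnd ℂ) x' = x'⁻¹ := by
      rw [Complex.inv_def]
      have : Complex.normSq x' = 1 := by rw [Complex.normSq_eq_norm_sq, Complex.norm_eq_abs, hx1]; norm_num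
      simp [this]
    have hzc : (starRingEnd ℂ) z ≠ 0 := by simpa using hz0
    have hd1c : (starRingEnd ℂ) (1 - z * x') ≠ 0 := by
      intro h; exact hd1 (by simpa using congrArg (starRingEnd ℂ) h)
    have hux : (starRingEnd ℂ) z - x' ≠ 0 := by
      intro h
      apply hd2
      have hxu : x' = (starRingEnd ℂ) z := by linear_combination -h
      rw [hxu, inv_mul_cancel₀ hzc, sub_self]
    have hux' : -(starRingEnd ℂ) z + x' ≠ 0 := by
      intro h; exact hux (by linear_combination -h)
    rw [show (star (z * x' / (1 - z * x')) : ℂ) = (starRingEnd ℂ) (z * x' / (1 - z * x')) from rfl,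
      map_div₀, map_mul, map_sub, map_one, map_mul, hx]
    rw [map_sub, map_one, map_mul, hx] at hd1c
    field_simp
    linear_combination (-(starRingEnd ℂ) z) * inv_mul_cancel₀ hux'
  rw [key]
  exact S.sub_mem (S.neg_mem one_mem_S) (kernel_mem_S _ _)

/-- product of two distinct kernels is in the span -/
lemma kernel_mul_kernel {z w : ℂ} (hz : Complex.abs z ≠ 1) (hw : Complex.abs w ≠ 1)
    (hzw : z ≠ w) :
    kernel z hz * kernel w hw
      = (w / (z - w)) • kernel z hz - (z / (z - w)) • kernel w hw := by
  ext x
  have hd1 : 1 - z * (x : ℂ) ≠ 0 := den_ne hz x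
  have hd2 : 1 - w * (x : ℂ) ≠ 0 := den_ne hw x
  have hzw' : z - w ≠ 0 := sub_ne_zero.mpr hzw
  have hd1' : 1 - (x : ℂ) * z ≠ 0 := by rwa [mul_comm]
  have hd2' : 1 - (x : ℂ) * w ≠ 0 := by rwa [mul_comm]
  simp only [ContinuousMap.mul_apply, ContinuousMap.sub_apply, ContinuousMap.smul_apply,
    kernel_apply, smul_eq_mul]
  field_simp
  ring

lemma norm_kernel_le (z : ℂ) (hz : Complex.abs z ≠ 1) :
    ‖kernel z hz‖ ≤ Complex.abs z / |Complex.abs z - 1| := by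
  have hδ := den_pos hz
  refine ContinuousMap.norm_le _ (by positivity) |>.mpr fun x => ?_
  rw [kernel_apply, Complex.norm_eq_abs, map_div₀, map_mul, abs_x, mul_one]
  exact div_le_div_of_nonneg_left (Complex.abs.nonneg _) hδ (den_lb x)

lemma norm_kernel_sub_le {z w : ℂ} (hz : Complex.abs z ≠ 1) (hw : Complex.abs w ≠ 1) :
    ‖kernel w hw - kernel z hz‖
      ≤ Complex.abs (w - z) / (|Complex.abs w - 1| * |Complex.abs z - 1|) := by
  have hδz := den_pos hz
  have hδw := den_pos hw
  refine ContinuousMap.norm_le _ (by positivity) |>.mpr fun x => ?_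
  have hd1 : 1 - z * (x : ℂ) ≠ 0 := den_ne hz x
  have hd2 : 1 - w * (x : ℂ) ≠ 0 := den_ne hw x
  have hd1' : 1 - (x : ℂ) * z ≠ 0 := by rwa [mul_comm]
  have hd2' : 1 - (x : ℂ) * w ≠ 0 := by rwa [mul_comm]
  have key : kernel w hw x - kernel z hz x
      = (w - z) * (x : ℂ) / ((1 - w * (x : ℂ)) * (1 - z * (x : ℂ))) := by
    rw [kernel_apply, kernel_apply]
    field_simp
    ring
  rw [ContinuousMap.sub_apply, key, Complex.norm_eq_abs, map_div₀, map_mul, map_mul, abs_x,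
    mul_one]
  gcongr
  · exact den_lb x
  · exact den_lb x

/-- the square of a kernel lies in the closure of the span -/
lemma kernel_sq_mem (z : ℂ) (hz : Complex.abs z ≠ 1) :
    kernel z hz * kernel z hz ∈ closure (S : Set C(X, ℂ)) := by
  rw [Metric.mem_closure_iff]
  intro ε hε
  set δ := |Complex.abs z - 1| with hδdef
  have hδ : 0 < δ := den_pos hz
  set M := Complex.abs z / δ with hM
  have hM0 : 0 ≤ M := by positivity
  set A := (δ / 2) * δ with hA
  have hA0 : 0 < A := by positivity
  set t := min (δ / 2) (ε * A / (2 * (M + 1))) with htdef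
  have ht0 : 0 < t := lt_min (by positivity) (by positivity)
  have ht1 : t ≤ δ / 2 := min_le_left _ _
  have ht2 : t ≤ ε * A / (2 * (M + 1)) := min_le_right _ _
  set w : ℂ := z + (t : ℝ) with hwdef
  have hwz : Complex.abs (w - z) = t := by
    rw [hwdef]
    simp [Complex.abs_ofReal, abs_of_pos ht0]
  have hwzne : z ≠ w := by
    intro h
    rw [← h] at hwz
    simp at hwz
    exact (ne_of_gt ht0) hwz.symm
  have habs : |Complex.abs w - Complex.abs z| ≤ t := by
    rw [← hwz]
    exact Complex.abs.abs_abv_sub_le_abv_sub w z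
  have hw : Complex.abs w ≠ 1 := by
    intro h
    rw [h] at habs
    have : δ ≤ t := by
      rw [hδdef]
      calc |Complex.abs z - 1| = |1 - Complex.abs z| := abs_sub_comm _ _
        _ ≤ t := habs
    linarith
  have hδw : δ / 2 ≤ |Complex.abs w - 1| := by
    have h1 : δ - t ≤ |Complex.abs w - 1| := by
      have := abs_sub_abs_le_abs_sub (Complex.abs z - 1) (Complex.abs z - Complex.abs w)
      rw [sub_sub_sub_cancel_left] at this
      have h2 : |Complex.abs z - Complex.abs w| ≤ t := by rwa [abs_sub_comm]
      calc δ - t ≤ |Complex.abs z - 1| - |Complex.abs z - Complex.abs w| := by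
            rw [hδdef]; linarith
        _ ≤ |Complex.abs w - 1| := this
    linarith
  refine ⟨kernel z hz * kernel w hw, ?_, ?_⟩
  · rw [kernel_mul_kernel hz hw hwzne]
    exact S.sub_mem (S.smul_mem _ (kernel_mem_S _ _)) (S.smul_mem _ (kernel_mem_S _ _))
  · rw [dist_eq_norm]
    have hfac : kernel z hz * kernel z hz - kernel z hz * kernel w hw
        = kernel z hz * (kernel z hz - kernel w hw) := by ring
    rw [hfac]
    calc ‖kernel z hz * (kernel z hz - kernel w hw)‖
        ≤ ‖kernel z hz‖ * ‖kernel z hz - kernel w hw‖ := norm_mul_le _ _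
      _ = ‖kernel z hz‖ * ‖kernel w hw - kernel z hz‖ := by rw [norm_sub_rev]
      _ ≤ M * (t / (|Complex.abs w - 1| * δ)) := by
          apply mul_le_mul (norm_kernel_le z hz)
          · have := norm_kernel_sub_le hz hw
            rwa [hwz, ← hδdef] at this
          · exact norm_nonneg _
          · exact hM0
      _ ≤ M * (t / A) := by
          gcongr
          rw [hA]
          gcongr
      _ ≤ M * ((ε * A / (2 * (M + 1))) / A) := by gcongr
      _ = M * ε / (2 * (M + 1)) := by field_simp
      _ < ε := by
          rw [div_lt_iff₀ (by positivity)]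
          nlinarith

/-- products of span elements lie in the closure -/
lemma S_mul_S (a : C(X, ℂ)) (ha : a ∈ S) (b : C(X, ℂ)) (hb : b ∈ S) :
    a * b ∈ closure (S : Set C(X, ℂ)) := by
  have h : S * S ≤ S.topologicalClosure := by
    rw [show S = Submodule.span ℂ (insert 1 K) from rfl, Submodule.span_mul_span,
      Submodule.span_le]
    rintro c hc
    rw [Set.mem_mul] at hc
    obtain ⟨a, ha, b, hb, rfl⟩ := hc
    rcases Set.mem_insert_iff.mp ha with rfl | ⟨z, hz, rfl⟩
    · rw [one_mul]
      exact S.le_topologicalClosure (Submodule.subset_span hb)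
    rcases Set.mem_insert_iff.mp hb with rfl | ⟨w, hw, rfl⟩
    · rw [mul_one]
      exact S.le_topologicalClosure (kernel_mem_S z hz)
    by_cases hzw : z = w
    · subst hzw
      have : kernel z hw = kernel z hz := rfl
      rw [this]
      exact kernel_sq_mem z hz
    · rw [kernel_mul_kernel hz hw hzw]
      exact S.le_topologicalClosure
        (S.sub_mem (S.smul_mem _ (kernel_mem_S _ _)) (S.smul_mem _ (kernel_mem_S _ _)))
  exact h (Submodule.mul_mem_mul ha hb)

lemma mul_mem_closure {f g : C(X, ℂ)} (hf : f ∈ closure (S : Set C(X, ℂ)))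
    (hg : g ∈ closure (S : Set C(X, ℂ))) : f * g ∈ closure (S : Set C(X, ℂ)) := by
  have := map_mem_closure₂ (f := fun a b : C(X, ℂ) => a * b)
    (by exact continuous_mul) hf hg (u := closure (S : Set C(X, ℂ))) S_mul_S
  rwa [closure_closure] at this

lemma star_S (a : C(X, ℂ)) (ha : a ∈ S) : star a ∈ S := by
  induction ha using Submodule.span_induction with
  | mem g hg =>
    rcases Set.mem_insert_iff.mp hg with rfl | ⟨z, hz, rfl⟩
    · rw [star_one]; exact one_mem_S
    · exact star_kernel_mem z hz
  | zero => rw [star_zero]; exact S.zero_mem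
  | add a b _ _ ha hb => rw [star_add]; exact S.add_mem ha hb
  | smul c a _ ha => rw [star_smul]; exact S.smul_mem _ ha

lemma star_mem_closure {f : C(X, ℂ)} (hf : f ∈ closure (S : Set C(X, ℂ))) :
    star f ∈ closure (S : Set C(X, ℂ)) :=
  map_mem_closure continuous_star hf star_S

/-- the closure of the span, as a star subalgebra -/
def A : StarSubalgebra ℂ C(X, ℂ) where
  carrier := closure (S : Set C(X, ℂ))
  mul_mem' := mul_mem_closure
  one_mem' := subset_closure one_mem_S
  add_mem' := fun hf hg => S.topologicalClosure.add_mem hf hg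
  zero_mem' := subset_closure S.zero_mem
  algebraMap_mem' := fun c => by
    rw [Algebra.algebraMap_eq_smul_one]
    exact subset_closure (S.smul_mem c one_mem_S)
  star_mem' := star_mem_closure

lemma A_separates : A.SeparatesPoints := by
  intro x y hxy
  have h2 : Complex.abs (1 / 2 : ℂ) ≠ 1 := by rw [← Complex.norm_eq_abs]; norm_num
  refine ⟨_, ⟨kernel (1 / 2) h2, subset_closure (kernel_mem_S _ _), rfl⟩, ?_⟩
  simp only [kernel_apply]
  intro h
  apply hxy
  have hdx : 1 - (1 / 2 : ℂ) * (x : ℂ) ≠ 0 := den_ne h2 x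
  have hdy : 1 - (1 / 2 : ℂ) * (y : ℂ) ≠ 0 := den_ne h2 y
  rw [div_eq_div_iff hdx hdy] at h
  ext
  linear_combination 2 * h

lemma mem_closure_S (f : C(X, ℂ)) : f ∈ closure (S : Set C(X, ℂ)) := by
  have htop := ContinuousMap.starSubalgebra_topologicalClosure_eq_top_of_separatesPoints A
    A_separates
  have : f ∈ A.topologicalClosure := by rw [htop]; trivial
  have hA : (A.topologicalClosure : Set C(X, ℂ)) = closure (A : Set C(X, ℂ)) := rfl
  have : f ∈ closure (A : Set C(X, ℂ)) := this
  rwa [show (A : Set C(X, ℂ)) = closure (S : Set C(X, ℂ)) from rfl, closure_closure] at this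

end CircleKernels

/-- The complex linear span of the constant function `1` together with the functions
`x ↦ zx/(1 - zx)` for `z ∈ ℂ` with `|z| ≠ 1`, restricted to the unit circle,
is dense in `C(𝕋)` with respect to the uniform norm. -/
theorem circle_kernels_dense (f : C(Metric.sphere (0 : ℂ) 1, ℂ)) (ε : ℝ) (hε : 0 < ε) :
    ∃ (c₀ : ℂ) (n : ℕ) (c : Fin n → ℂ) (z : Fin n → ℂ),
      (∀ i, ‖z i‖ ≠ 1) ∧
      ∀ x : Metric.sphere (0 : ℂ) 1,
        ‖f x - (c₀ + ∑ i, c i * (z i * (x : ℂ) / (1 - z i * (x : ℂ))))‖ < ε := by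
  classical
  obtain ⟨g, hgS, hgd⟩ := Metric.mem_closure_iff.mp (CircleKernels.mem_closure_S f) ε hε
  rw [SetLike.mem_coe, CircleKernels.S, Submodule.mem_span_insert] at hgS
  obtain ⟨a, h, hh, rfl⟩ := hgS
  obtain ⟨n, c, gi, rfl⟩ := Submodule.mem_span_set'.mp hh
  choose z hz hker using fun i => (gi i).2
  refine ⟨a, n, c, z, hz, fun x => ?_⟩
  have hgx : (a • (1 : C(Metric.sphere (0 : ℂ) 1, ℂ)) + ∑ i, c i • ((gi i : C(Metric.sphere (0 : ℂ) 1, ℂ)))) x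
      = a + ∑ i, c i * (z i * (x : ℂ) / (1 - z i * (x : ℂ))) := by
    rw [ContinuousMap.add_apply, ContinuousMap.smul_apply, ContinuousMap.one_apply,
      smul_eq_mul, mul_one, ContinuousMap.sum_apply]
    congr 1
    apply Finset.sum_congr rfl
    intro i _
    rw [ContinuousMap.smul_apply, smul_eq_mul, hker i, CircleKernels.kernel_apply]
  rw [← hgx,
    show f x - (a • 1 + ∑ i, c i • ((gi i : C(Metric.sphere (0 : ℂ) 1, ℂ)))) x
      = (f - (a • 1 + ∑ i, c i • ((gi i : C(Metric.sphere (0 : ℂ) 1, ℂ))))) x from rfl]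
  calc ‖(f - (a • 1 + ∑ i, c i • ((gi i : C(Metric.sphere (0 : ℂ) 1, ℂ))))) x‖
      ≤ ‖f - (a • 1 + ∑ i, c i • ((gi i : C(Metric.sphere (0 : ℂ) 1, ℂ))))‖ :=
        ContinuousMap.norm_coe_le_norm _ x
    _ < ε := by rwa [dist_eq_norm] at hgd
end
end

section
/- Let μ be a Borel probability measure on the unit circle, identified with angles θ ∈ (−π, π], and δ ∈ (0, π/2). Then |1 − m₁(μ)|² ≤ 2δ² + 10·(μ({θ : |θ| > δ}))², where m₁(μ) = ∫ e^{iθ} dμ(θ). -/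
open MeasureTheory Complex Real

lemma abs_one_sub_le_abs_arg {z : ℂ} (hz : ‖z‖ = 1) :
    ‖1 - z‖ ≤ |Complex.arg z| := by
  set θ := Complex.arg z with hθ
  have hz' : z = Complex.exp (θ * Complex.I) := by
    conv_lhs => rw [← Complex.norm_mul_exp_arg_mul_I z]
    rw [hz]
    simp [hθ]
  have hre : (1 : ℂ) - z = Complex.ofReal (1 - Real.cos θ) + Complex.ofReal (-Real.sin θ) * Complex.I := by
    rw [hz', Complex.exp_mul_I]
    push_cast
    ring
  have hsq : ‖1 - z‖ ^ 2 = (1 - Real.cos θ) ^ 2 + (-Real.sin θ) ^ 2 := by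
    rw [hre, Complex.sq_norm, Complex.normSq_add_mul_I]
  have hcos : Real.cos θ = 1 - 2 * Real.sin (θ / 2) ^ 2 := by
    have h := Real.cos_two_mul (θ / 2)
    rw [show 2 * (θ / 2) = θ by ring] at h
    nlinarith [Real.sin_sq_add_cos_sq (θ / 2)]
  have hsin : Real.sin (θ / 2) ^ 2 ≤ (θ / 2) ^ 2 := by
    have h := Real.abs_sin_le_abs (x := θ / 2)
    calc Real.sin (θ / 2) ^ 2 = |Real.sin (θ / 2)| ^ 2 := (_root_.sq_abs _).symm
      _ ≤ |θ / 2| ^ 2 := pow_le_pow_left₀ (abs_nonneg _) h 2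
      _ = (θ / 2) ^ 2 := _root_.sq_abs _
  have hle : ‖1 - z‖ ^ 2 ≤ |θ| ^ 2 := by
    rw [hsq]
    have : |θ| ^ 2 = θ ^ 2 := _root_.sq_abs _
    nlinarith [Real.sin_sq_add_cos_sq θ]
  calc ‖1 - z‖ = Real.sqrt (‖1 - z‖ ^ 2) :=
        (Real.sqrt_sq (norm_nonneg _)).symm
    _ ≤ Real.sqrt (|θ| ^ 2) := Real.sqrt_le_sqrt hle
    _ = |θ| := Real.sqrt_sq (abs_nonneg _)

/-- For a probability measure `μ` on the unit circle (points identified with their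
angles `θ = arg ξ ∈ (-π, π]`) and `δ ∈ (0, π/2)`:
`|1 - m₁(μ)|² ≤ 2δ² + 10·(μ({θ : |θ| > δ}))²`, where `m₁(μ)` is the first moment. -/
theorem first_moment_le_of_tail (μ : Measure (Metric.sphere (0 : ℂ) 1))
    [IsProbabilityMeasure μ] (δ : ℝ) (hδ : δ ∈ Set.Ioo 0 (π / 2)) :
    ‖1 - ∫ x : Metric.sphere (0 : ℂ) 1, (x : ℂ) ∂μ‖ ^ 2 ≤
      2 * δ ^ 2 + 10 * (μ {x : Metric.sphere (0 : ℂ) 1 | δ < |Complex.arg (x : ℂ)|}).toReal ^ 2 := by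
  obtain ⟨hδ0, hδπ⟩ := hδ
  set S : Set (Metric.sphere (0 : ℂ) 1) := {x | δ < |Complex.arg (x : ℂ)|} with hS
  have hSm : MeasurableSet S := by
    apply measurableSet_lt measurable_const
    exact (Complex.measurable_arg.comp continuous_subtype_val.measurable).abs
  set t := (μ S).toReal with ht
  have ht0 : 0 ≤ t := ENNReal.toReal_nonneg
  have hI : Integrable (fun x : Metric.sphere (0 : ℂ) 1 => (x : ℂ)) μ := by
    apply Continuous.integrable_of_hasCompactSupport continuous_subtype_val
    exact HasCompactSupport.of_compactSpace _
  have h1 : (1 : ℂ) - ∫ x : Metric.sphere (0 : ℂ) 1, (x : ℂ) ∂μ =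
      ∫ x : Metric.sphere (0 : ℂ) 1, (1 - (x : ℂ)) ∂μ := by
    rw [integral_sub (integrable_const 1) hI, integral_const, probReal_univ]
    simp
  have hbound : ∀ x : Metric.sphere (0 : ℂ) 1,
      ‖(1 : ℂ) - (x : ℂ)‖ ≤ δ + S.indicator (fun _ => (2 : ℝ)) x := by
    intro x
    have hx1 : ‖(x : ℂ)‖ = 1 := by
      have := x.2
      simpa [Complex.dist_eq] using this
    by_cases hx : x ∈ S
    · rw [Set.indicator_of_mem hx]
      calc ‖(1 : ℂ) - (x : ℂ)‖ ≤ ‖(1 : ℂ)‖ + ‖(x : ℂ)‖ := norm_sub_le _ _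
        _ = 2 := by simp [hx1]; norm_num
        _ ≤ δ + 2 := by linarith
    · rw [Set.indicator_of_notMem hx, add_zero]
      have hx' : |Complex.arg (x : ℂ)| ≤ δ := le_of_not_gt hx
      exact le_trans (abs_one_sub_le_abs_arg hx1) hx'
  have hIind : Integrable (fun x => S.indicator (fun _ => (2 : ℝ)) x) μ :=
    (integrable_const (2 : ℝ)).indicator hSm
  have hInt : ‖1 - ∫ x : Metric.sphere (0 : ℂ) 1, (x : ℂ) ∂μ‖ ≤ δ + 2 * t := by
    rw [h1]
    calc ‖∫ x : Metric.sphere (0 : ℂ) 1, (1 - (x : ℂ)) ∂μ‖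
        ≤ ∫ x : Metric.sphere (0 : ℂ) 1, ‖(1 : ℂ) - (x : ℂ)‖ ∂μ :=
          norm_integral_le_integral_norm _
      _ ≤ ∫ x : Metric.sphere (0 : ℂ) 1, (δ + S.indicator (fun _ => (2 : ℝ)) x) ∂μ := by
          apply integral_mono ((integrable_const 1).sub hI).norm
            ((integrable_const δ).add hIind)
          exact hbound
      _ = δ + 2 * t := by
          rw [integral_add (integrable_const δ) hIind, integral_const, probReal_univ,
            integral_indicator_const _ hSm]
          simp [ht, mul_comm, Measure.real]
  have habs0 : 0 ≤ ‖1 - ∫ x : Metric.sphere (0 : ℂ) 1, (x : ℂ) ∂μ‖ :=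
    norm_nonneg _
  nlinarith [sq_nonneg (δ - 2 * t), mul_pos hδ0 hδ0]
end

section
/- Suppose μ is a Borel probability measure on ℝ of the form μ = KM(ν) for a probability measure ν on ℝ with ∫ log(1+|x|) dν(x) < ∞, i.e., the Cauchy transform of μ satisfies G_μ(z) = exp(−∫ log(z−x) dν(z)) for all z ∈ ℂ⁺ (principal branch of log). If ν is not a Dirac delta measure, then μ has no atoms: μ({a}) = 0 for every a ∈ ℝ. -/
open MeasureTheory Complex Filter Set Topology
open scoped ENNReal

lemma aux_eq_dirac_of_compl (ν : Measure ℝ) [IsProbabilityMeasure ν] (a : ℝ)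
    (h : ν {a}ᶜ = 0) : ν = Measure.dirac a := by
  have hsingle : ν {a} = 1 := by
    have h2 := measure_add_measure_compl (μ := ν) (measurableSet_singleton a)
    rw [h, add_zero, measure_univ] at h2
    exact h2
  ext s hs
  by_cases ha : a ∈ s
  · rw [Measure.dirac_apply_of_mem ha]
    refine le_antisymm prob_le_one ?_
    calc (1 : ℝ≥0∞) = ν {a} := hsingle.symm
    _ ≤ ν s := measure_mono (Set.singleton_subset_iff.2 ha)
  · rw [Measure.dirac_apply' a hs, Set.indicator_of_notMem ha]
    refine measure_mono_null ?_ h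
    intro x hx hxa
    exact ha ((Set.mem_singleton_iff.1 hxa) ▸ hx)

/-- Integrability of the complex log kernel. -/
lemma aux_integrable_log (ν : Measure ℝ) [IsProbabilityMeasure ν]
    (hlog : Integrable (fun x : ℝ => Real.log (1 + |x|)) ν)
    (a y : ℝ) (hy : 0 < y) :
    Integrable (fun x : ℝ => Complex.log ((a : ℂ) + y * I - x)) ν := by
  have hcont : Continuous fun x : ℝ => (a : ℂ) + y * I - x := by fun_prop
  have hmeas : AEStronglyMeasurable (fun x : ℝ => Complex.log ((a : ℂ) + y * I - x)) ν := by
    refine (Continuous.aestronglyMeasurable ?_)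
    refine hcont.clog fun x => Or.inr ?_
    have : ((a : ℂ) + y * I - x).im = y := by simp
    rw [this]; exact hy.ne'
  refine (hlog.add (integrable_const (|Real.log y| + Real.log (1 + |a| + y) + Real.pi))).mono'
      hmeas (Filter.Eventually.of_forall fun x => ?_)
  set w : ℂ := (a : ℂ) + y * I - x with hw
  have him : w.im = y := by simp [hw]
  have hre : w.re = a - x := by simp [hw]
  have habs_low : y ≤ ‖w‖ := by
    calc y = |w.im| := by rw [him, abs_of_pos hy]
    _ ≤ ‖w‖ := Complex.abs_im_le_norm w
  have hwpos : 0 < ‖w‖ := lt_of_lt_of_le hy habs_low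
  have habs_up : ‖w‖ ≤ (1 + |x|) * (1 + |a| + y) := by
    have h1 : |a - x| ≤ |a| + |x| := abs_sub a x
    calc ‖w‖ ≤ |w.re| + |w.im| := Complex.norm_le_abs_re_add_abs_im w
    _ = |a - x| + y := by rw [hre, him, abs_of_pos hy]
    _ ≤ (1 + |x|) * (1 + |a| + y) := by
        nlinarith [abs_nonneg x, abs_nonneg a, hy.le,
          mul_nonneg (abs_nonneg x) (abs_nonneg a), mul_nonneg (abs_nonneg x) hy.le]
  have hx0 : (0:ℝ) ≤ Real.log (1 + |x|) := Real.log_nonneg (by linarith [abs_nonneg x])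
  have ha0 : (0:ℝ) ≤ Real.log (1 + |a| + y) := Real.log_nonneg (by linarith [abs_nonneg a])
  have l1 : Real.log y ≤ Real.log (‖w‖) := Real.log_le_log hy habs_low
  have l2 : Real.log (‖w‖) ≤ Real.log (1 + |x|) + Real.log (1 + |a| + y) := by
    calc Real.log (‖w‖) ≤ Real.log ((1 + |x|) * (1 + |a| + y)) :=
          Real.log_le_log hwpos habs_up
    _ = Real.log (1 + |x|) + Real.log (1 + |a| + y) := by
          rw [Real.log_mul (by positivity) (by positivity)]
  have hlogabs : |Real.log (‖w‖)| ≤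
      Real.log (1 + |x|) + Real.log (1 + |a| + y) + |Real.log y| := by
    rw [abs_le]
    constructor
    · have : -|Real.log y| ≤ Real.log y := neg_abs_le _
      linarith
    · linarith [abs_nonneg (Real.log y)]
  simp only [Pi.add_apply]
  calc ‖Complex.log w‖ ≤ |(Complex.log w).re| + |(Complex.log w).im| :=
        Complex.norm_le_abs_re_add_abs_im _
  _ = |Real.log (‖w‖)| + |w.arg| := by rw [Complex.log_re, Complex.log_im]
  _ ≤ (Real.log (1 + |x|) + Real.log (1 + |a| + y) + |Real.log y|) + Real.pi :=
        add_le_add hlogabs (Complex.abs_arg_le_pi w)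
  _ = Real.log (1 + |x|) + (|Real.log y| + Real.log (1 + |a| + y) + Real.pi) := by ring

/-- If `μ` is the Markov transform of a probability measure `ν` on `ℝ` with
`∫ log(1+|x|) dν < ∞`, i.e. the Cauchy transform of `μ` satisfies
`G_μ(z) = exp(-∫ log(z-x) dν(x))` on the upper half-plane, and `ν` is not a
Dirac measure, then `μ` has no atoms. -/
theorem markov_transform_no_atoms (μ ν : Measure ℝ)
    [IsProbabilityMeasure μ] [IsProbabilityMeasure ν]
    (hlog : Integrable (fun x : ℝ => Real.log (1 + |x|)) ν)
    (hKM : ∀ z : ℂ, 0 < z.im →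
      (∫ x : ℝ, (z - (x : ℂ))⁻¹ ∂μ) = Complex.exp (-∫ x : ℝ, Complex.log (z - (x : ℂ)) ∂ν))
    (hν : ∀ b : ℝ, ν ≠ Measure.dirac b) :
    ∀ a : ℝ, μ {a} = 0 := by
  intro a
  -- Step 1: find δ > 0 with positive ν-measure away from a
  have hcompl : ν {a}ᶜ ≠ 0 := fun h => hν a (aux_eq_dirac_of_compl ν a h)
  obtain ⟨m, hm⟩ : ∃ m : ℕ, ν {x : ℝ | 1 / ((m : ℝ) + 1) ≤ |x - a|} ≠ 0 := by
    by_contra hcon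
    push_neg at hcon
    refine hcompl (measure_mono_null ?_ (measure_iUnion_null hcon))
    intro x hx
    have hxa : x - a ≠ 0 := sub_ne_zero.2 hx
    have hpos : 0 < |x - a| := abs_pos.2 hxa
    obtain ⟨m, hm⟩ := exists_nat_gt (1 / |x - a|)
    refine Set.mem_iUnion.2 ⟨m, ?_⟩
    have : 1 / |x - a| < (m : ℝ) + 1 := hm.trans_le (by linarith)
    have := (div_lt_iff₀ hpos).1 this
    simp only [Set.mem_setOf_eq]
    rw [div_le_iff₀ (by positivity)]
    nlinarith
  set δ : ℝ := 1 / ((m : ℝ) + 1) with hδdef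
  have hδ : 0 < δ := by positivity
  set s : Set ℝ := {x : ℝ | δ ≤ |x - a|} with hsdef
  have hsm : MeasurableSet s := by
    have : s = (fun x : ℝ => |x - a|) ⁻¹' (Set.Ici δ) := rfl
    rw [this]
    exact (measurable_id.sub_const a).abs measurableSet_Ici
  set c : ℝ := (ν s).toReal with hcdef
  have hc : 0 < c := ENNReal.toReal_pos hm (measure_ne_top ν s)
  -- Step 2: key bound
  have key : ∀ y : ℝ, 0 < y →
      ‖∫ x : ℝ, ((y : ℂ) * I) * ((a : ℂ) + y * I - x)⁻¹ ∂μ‖ ≤ y ^ c * δ ^ (-c) := by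
    intro y hy
    set z : ℂ := (a : ℂ) + y * I with hz
    have hzim : 0 < z.im := by simp [hz, hy]
    have intlog : Integrable (fun x : ℝ => Complex.log (z - x)) ν :=
      aux_integrable_log ν hlog a y hy
    -- lower bound on real part of the log integral
    have hmono : Real.log y + c * (Real.log δ - Real.log y) ≤
        ∫ x, (Complex.log (z - x)).re ∂ν := by
      have h1 : ∫ x, (Real.log y + s.indicator (fun _ => Real.log δ - Real.log y) x) ∂ν
          = Real.log y + c * (Real.log δ - Real.log y) := by
        rw [integral_add (integrable_const _) ((integrable_const _).indicator hsm),
          integral_const, integral_indicator_const _ hsm]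
        simp [measure_univ, smul_eq_mul, hcdef, measureReal_def]
      rw [← h1]
      refine integral_mono ((integrable_const _).add ((integrable_const _).indicator hsm))
        intlog.re fun x => ?_
      have him : (z - x).im = y := by simp [hz]
      have hre : (z - x).re = a - x := by simp [hz]
      have habs_low : y ≤ ‖z - x‖ := by
        calc y = |(z - x).im| := by rw [him, abs_of_pos hy]
        _ ≤ ‖z - x‖ := Complex.abs_im_le_norm _
      rw [Complex.log_re]
      by_cases hxs : x ∈ s
      · have hd : δ ≤ ‖z - x‖ := by
          calc δ ≤ |x - a| := hxs
          _ = |a - x| := abs_sub_comm x a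
          _ = |(z - x).re| := by rw [hre]
          _ ≤ ‖z - x‖ := Complex.abs_re_le_norm _
        simp only [Set.indicator_of_mem hxs]
        have := Real.log_le_log hδ hd
        linarith
      · simp only [Set.indicator_of_notMem hxs, add_zero]
        exact Real.log_le_log hy habs_low
    have hIre : (∫ x, Complex.log (z - x) ∂ν).re = ∫ x, (Complex.log (z - x)).re ∂ν :=
      (integral_re intlog).symm
    have hpull : ∫ x : ℝ, ((y : ℂ) * I) * (z - x)⁻¹ ∂μ
        = ((y : ℂ) * I) * ∫ x : ℝ, (z - x)⁻¹ ∂μ := integral_const_mul _ _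
    rw [hpull, hKM z hzim]
    rw [norm_mul]
    have hnorm1 : ‖(y : ℂ) * I‖ = y := by
      simp [abs_of_pos hy]
    have hnorm2 : ‖Complex.exp (-∫ x : ℝ, Complex.log (z - x) ∂ν)‖
        = Real.exp (-(∫ x, (Complex.log (z - x)).re ∂ν)) := by
      rw [Complex.norm_exp, Complex.neg_re, hIre]
    rw [hnorm1, hnorm2]
    calc y * Real.exp (-(∫ x, (Complex.log (z - x)).re ∂ν))
        ≤ y * Real.exp (-(Real.log y + c * (Real.log δ - Real.log y))) := by
          gcongr
    _ = y ^ c * δ ^ (-c) := by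
          rw [Real.rpow_def_of_pos hy, Real.rpow_def_of_pos hδ]
          rw [← Real.exp_log hy, ← Real.exp_add, ← Real.exp_add, Real.log_exp]
          ring_nf
  -- Step 3: dominated convergence
  set Y : ℕ → ℝ := fun n => 1 / ((n : ℝ) + 1) with hY
  have hYpos : ∀ n, 0 < Y n := fun n => by positivity
  have hYlim : Tendsto Y atTop (𝓝 0) := tendsto_one_div_add_atTop_nhds_zero_nat
  have hdct : Tendsto (fun n => ∫ x : ℝ, ((Y n : ℂ) * I) * ((a : ℂ) + (Y n) * I - x)⁻¹ ∂μ)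
      atTop (𝓝 (∫ x : ℝ, Set.indicator {a} (fun _ => (1 : ℂ)) x ∂μ)) := by
    refine tendsto_integral_of_dominated_convergence (fun _ => (1 : ℝ)) ?_ (integrable_const 1)
      ?_ ?_
    · intro n
      have hden : ∀ x : ℝ, (a : ℂ) + (Y n) * I - x ≠ 0 := by
        intro x h0
        have := congrArg Complex.im h0
        simp at this
        exact (hYpos n).ne' this
      exact ((continuous_const.mul (Continuous.inv₀ (by fun_prop) hden)).aestronglyMeasurable)
    · intro n
      refine Filter.Eventually.of_forall fun x => ?_
      have him : ((a : ℂ) + (Y n) * I - x).im = Y n := by simp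
      have habs_low : Y n ≤ ‖(a : ℂ) + (Y n) * I - x‖ := by
        calc Y n = |((a : ℂ) + (Y n) * I - x).im| := by rw [him, abs_of_pos (hYpos n)]
        _ ≤ _ := Complex.abs_im_le_norm _
      have hpos : 0 < ‖(a : ℂ) + (Y n) * I - x‖ := lt_of_lt_of_le (hYpos n) habs_low
      rw [norm_mul, norm_inv]
      have h1 : ‖(Y n : ℂ) * I‖ = Y n := by simp [abs_of_pos (hYpos n)]
      rw [h1]
      calc Y n * ‖(a : ℂ) + (Y n) * I - x‖⁻¹
          ≤ ‖(a : ℂ) + (Y n) * I - x‖ * ‖(a : ℂ) + (Y n) * I - x‖⁻¹ := by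
            gcongr
      _ = 1 := mul_inv_cancel₀ hpos.ne'
    · refine Filter.Eventually.of_forall fun x => ?_
      by_cases hx : x = a
      · subst hx
        have heq : ∀ n : ℕ, ((Y n : ℂ) * I) * ((x : ℂ) + (Y n) * I - x)⁻¹ = 1 := by
          intro n
          have : (x : ℂ) + (Y n) * I - x = (Y n : ℂ) * I := by ring
          rw [this, mul_inv_cancel₀]
          simp [Complex.ext_iff, (hYpos n).ne']
        rw [Set.indicator_of_mem (Set.mem_singleton x)]
        exact Tendsto.congr (fun n => (heq n).symm) tendsto_const_nhds
      · rw [Set.indicator_of_notMem (by simpa using hx)]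
        have h1 : Tendsto (fun n => ((Y n : ℝ) : ℂ) * I) atTop (𝓝 0) := by
          have := (Complex.continuous_ofReal.tendsto 0).comp hYlim
          simpa using this.mul_const I
        have hne : (a : ℂ) - x ≠ 0 := by
          rw [sub_ne_zero]
          exact fun h => hx (by exact_mod_cast h.symm)
        have h2 : Tendsto (fun n => ((a : ℂ) + (Y n) * I - x)⁻¹) atTop (𝓝 (((a : ℂ) - x)⁻¹)) := by
          refine Tendsto.inv₀ ?_ hne
          have : Tendsto (fun n => (a : ℂ) + (Y n) * I - x) atTop (𝓝 ((a : ℂ) + 0 - x)) := by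
            refine Tendsto.sub (Tendsto.add tendsto_const_nhds ?_) tendsto_const_nhds
            have := (Complex.continuous_ofReal.tendsto 0).comp hYlim
            simpa using this.mul_const I
          simpa using this
        have := h1.mul h2
        simpa using this
  rw [integral_indicator_const (1 : ℂ) (measurableSet_singleton a)] at hdct
  simp only [Complex.real_smul, mul_one] at hdct
  -- Step 4: conclude
  have hb : Tendsto (fun n => (Y n) ^ c * δ ^ (-c)) atTop (𝓝 0) := by
    have h0 : Tendsto (fun n => (Y n) ^ c) atTop (𝓝 0) := by
      have := ((Real.continuousAt_rpow_const 0 c (Or.inr hc.le)).tendsto).comp hYlim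
      simpa [Function.comp_def, Real.zero_rpow hc.ne'] using this
    simpa using h0.mul_const (δ ^ (-c))
  have hle : ‖(((μ {a}).toReal : ℝ) : ℂ)‖ ≤ 0 :=
    le_of_tendsto_of_tendsto' hdct.norm hb fun n => key (Y n) (hYpos n)
  have htoReal : (μ {a}).toReal = 0 := by
    have h0 : ‖(((μ {a}).toReal : ℝ) : ℂ)‖ = 0 := le_antisymm hle (norm_nonneg _)
    simpa using h0
  exact (ENNReal.toReal_eq_zero_iff _).1 htoReal |>.resolve_right (measure_ne_top μ _)
end

section
/- Let f : 𝔻 → ℂ be holomorphic on the unit disk with f(0) = 0, and suppose there exist a ∈ ℂ with Re(a) > 0 and holomorphic p : 𝔻 → ℂ with p(0) = a and Re p(z) > 0 on 𝔻, such that f generates a semigroup (a flow): there exist holomorphic self-maps η_t : 𝔻 → 𝔻 (t ≥ 0) with η₀ = id, η_s ∘ η_t = η_{s+t}, η₁ = f, and ∂_t η_t(z) = −η_t(z)·p(η_t(z)). Then f is injective on 𝔻. -/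
open Complex Metric Set

/-- If a holomorphic function `f` on the unit disk with `f 0 = 0` embeds at time `1`
into a semigroup `(η_t)_{t ≥ 0}` of holomorphic self-maps of the disk solving the
ODE `∂_t η_t(z) = -η_t(z)·p(η_t(z))` with Berkson–Porta data `p` satisfying
`p 0 = a`, `Re a > 0`, `Re p > 0` on the disk, then `f` is injective on the disk. -/
theorem semigroup_element_injective (f : ℂ → ℂ)
    (hf : DifferentiableOn ℂ f (Metric.ball (0 : ℂ) 1)) (hf0 : f 0 = 0)
    (a : ℂ) (ha : 0 < a.re)
    (p : ℂ → ℂ) (hp : DifferentiableOn ℂ p (Metric.ball (0 : ℂ) 1))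
    (hpa : p 0 = a) (hpre : ∀ z ∈ Metric.ball (0 : ℂ) 1, 0 < (p z).re)
    (η : ℝ → ℂ → ℂ)
    (hmaps : ∀ t : ℝ, 0 ≤ t →
      Set.MapsTo (η t) (Metric.ball (0 : ℂ) 1) (Metric.ball (0 : ℂ) 1))
    (hhol : ∀ t : ℝ, 0 ≤ t → DifferentiableOn ℂ (η t) (Metric.ball (0 : ℂ) 1))
    (hid : ∀ z ∈ Metric.ball (0 : ℂ) 1, η 0 z = z)
    (hsg : ∀ s : ℝ, 0 ≤ s → ∀ t : ℝ, 0 ≤ t → ∀ z ∈ Metric.ball (0 : ℂ) 1,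
      η s (η t z) = η (s + t) z)
    (hη1 : ∀ z ∈ Metric.ball (0 : ℂ) 1, η 1 z = f z)
    (hode : ∀ z ∈ Metric.ball (0 : ℂ) 1, ∀ t : ℝ, 0 ≤ t →
      HasDerivWithinAt (fun s : ℝ => η s z) (-(η t z) * p (η t z)) (Set.Ici 0) t) :
    Set.InjOn f (Metric.ball (0 : ℂ) 1) := by
  intro z₁ hz₁ z₂ hz₂ hfz
  -- the vector field
  set F : ℂ → ℂ := fun w => -w * p w with hF
  have hFdiff : DifferentiableOn ℂ F (Metric.ball (0 : ℂ) 1) :=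
    fun w hw => (differentiableWithinAt_id.neg).mul (hp w hw)
  -- continuity of trajectories
  have hcont : ∀ z ∈ Metric.ball (0 : ℂ) 1,
      ContinuousOn (fun t : ℝ => η t z) (Set.Icc 0 1) := fun z hz t ht =>
    ((hode z hz t ht.1).continuousWithinAt).mono Set.Icc_subset_Ici_self
  -- trajectories land in the ball
  have htraj : ∀ z ∈ Metric.ball (0 : ℂ) 1, ∀ t ∈ Set.Icc (0:ℝ) 1,
      η t z ∈ Metric.ball (0 : ℂ) 1 := fun z hz t ht => hmaps t ht.1 hz
  -- the compact set containing both trajectories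
  set K : Set ℂ := ((fun t : ℝ => η t z₁) '' Set.Icc 0 1) ∪
      ((fun t : ℝ => η t z₂) '' Set.Icc 0 1) with hKdef
  have hKcomp : IsCompact K :=
    (isCompact_Icc.image_of_continuousOn (hcont z₁ hz₁)).union
      (isCompact_Icc.image_of_continuousOn (hcont z₂ hz₂))
  have hKsub : K ⊆ Metric.ball (0 : ℂ) 1 := by
    rintro w (⟨t, ht, rfl⟩ | ⟨t, ht, rfl⟩)
    · exact htraj z₁ hz₁ t ht
    · exact htraj z₂ hz₂ t ht
  have hKne : K.Nonempty := ⟨η 0 z₁, Or.inl ⟨0, Set.left_mem_Icc.2 zero_le_one, rfl⟩⟩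
  -- bound the norm on K
  obtain ⟨w₀, hw₀K, hw₀max⟩ := hKcomp.exists_isMaxOn hKne continuous_norm.continuousOn
  set r : ℝ := (‖w₀‖ + 1) / 2 with hr
  have hw₀lt : ‖w₀‖ < 1 := by simpa using hKsub hw₀K
  have hrlt : r < 1 := by rw [hr]; linarith
  have hKr : K ⊆ Metric.closedBall (0 : ℂ) r := by
    intro w hw
    have : ‖w‖ ≤ ‖w₀‖ := hw₀max hw
    simp only [Metric.mem_closedBall, dist_zero_right]
    rw [hr]; linarith
  have hrball : Metric.closedBall (0 : ℂ) r ⊆ Metric.ball (0 : ℂ) 1 := by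
    intro w hw
    simp only [Metric.mem_closedBall, dist_zero_right] at hw
    simp only [Metric.mem_ball, dist_zero_right]
    linarith
  -- F is Lipschitz on the closed ball of radius r
  have hFan : AnalyticOnNhd ℂ F (Metric.ball (0 : ℂ) 1) :=
    hFdiff.analyticOnNhd Metric.isOpen_ball
  have hder_cont : ContinuousOn (fderiv ℂ F) (Metric.ball (0 : ℂ) 1) :=
    hFan.fderiv.continuousOn
  obtain ⟨C, hC⟩ := (isCompact_closedBall (0:ℂ) r).exists_bound_of_continuousOn
      (hder_cont.mono hrball)
  have hlip : LipschitzOnWith (Real.toNNReal C) F (Metric.closedBall (0 : ℂ) r) := by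
    apply (convex_closedBall (0:ℂ) r).lipschitzOnWith_of_nnnorm_fderiv_le (𝕜 := ℂ)
    · intro x hx
      exact (hFdiff x (hrball hx)).differentiableAt
        (Metric.isOpen_ball.mem_nhds (hrball hx))
    · intro x hx
      have h1 : ‖fderiv ℂ F x‖ ≤ C := hC x hx
      rw [← NNReal.coe_le_coe, coe_nnnorm, Real.coe_toNNReal C ((norm_nonneg _).trans h1)]
      exact h1
  -- derivatives of trajectories in the interior
  have hderiv : ∀ z ∈ Metric.ball (0 : ℂ) 1, ∀ t ∈ Set.Ioc (0:ℝ) 1,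
      HasDerivWithinAt (fun s : ℝ => η s z) (F (η t z)) (Set.Iic t) t := by
    intro z hz t ht
    exact (((hode z hz t ht.1.le).hasDerivAt (Ici_mem_nhds ht.1)).hasDerivWithinAt)
  -- backward uniqueness
  have key : Set.EqOn (fun t : ℝ => η t z₁) (fun t : ℝ => η t z₂) (Set.Icc 0 1) := by
    apply ODE_solution_unique_of_mem_Icc_left
      (v := fun _ w => F w) (s := fun _ => Metric.closedBall (0 : ℂ) r)
      (fun _ _ => hlip)
      (hcont z₁ hz₁) (hderiv z₁ hz₁)
      (fun t ht => hKr (Or.inl ⟨t, ⟨ht.1.le, ht.2⟩, rfl⟩))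
      (hcont z₂ hz₂) (hderiv z₂ hz₂)
      (fun t ht => hKr (Or.inr ⟨t, ⟨ht.1.le, ht.2⟩, rfl⟩))
    show η 1 z₁ = η 1 z₂
    rw [hη1 z₁ hz₁, hη1 z₂ hz₂, hfz]
  have h0 := key (Set.left_mem_Icc.2 zero_le_one)
  simpa [hid z₁ hz₁, hid z₂ hz₂] using h0
end

section
/- Let μ be a Borel probability measure on ℝ and suppose there exists a real-valued random variable X, independent of a uniform random variable U on (0,1), such that μ is the law of U·X + c for some c ∈ ℝ. Then Im((z − c)·G_μ'(z)) ≥ 0 for all z ∈ ℂ⁺, where G_μ is the Cauchy transform of μ. -/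
open MeasureTheory Complex ProbabilityTheory Metric

lemma aux_ne {w : ℂ} (hw : 0 < w.im) (t : ℝ) : w - (t : ℂ) ≠ 0 := by
  intro h
  have h2 : (w - (t : ℂ)).im = 0 := by rw [h]; rfl
  rw [Complex.sub_im, Complex.ofReal_im, sub_zero] at h2
  linarith

lemma aux_norm {w : ℂ} (hw : 0 < w.im) (t : ℝ) : w.im ≤ ‖w - (t : ℂ)‖ := by
  have h := Complex.abs_im_le_norm (w - t)
  rw [Complex.sub_im, Complex.ofReal_im, sub_zero] at h
  exact le_trans (le_abs_self _) h

lemma inner_int {w : ℂ} (hw : 0 < w.im) (x : ℝ) :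
    (∫ u in Set.Ioo (0:ℝ) 1, -w * ((w - (u:ℂ)*(x:ℂ))^2)⁻¹) = -(w - (x:ℂ))⁻¹ := by
  have hw0 : w ≠ 0 := by simpa using aux_ne hw 0
  have hne : ∀ u : ℝ, w - (u:ℂ)*(x:ℂ) ≠ 0 := by
    intro u; have := aux_ne hw (u*x); push_cast at this; exact this
  rcases eq_or_ne x 0 with rfl | hx
  · simp only [Complex.ofReal_zero, mul_zero, sub_zero]
    rw [setIntegral_const]
    have h1 : (volume.real (Set.Ioo (0:ℝ) 1)) = 1 := by simp
    rw [h1, one_smul]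
    field_simp
  · have hxC : (x:ℂ) ≠ 0 := Complex.ofReal_ne_zero.mpr hx
    have hwx : w - (x:ℂ) ≠ 0 := aux_ne hw x
    have key : ∀ u ∈ Set.uIcc (0:ℝ) 1,
        HasDerivAt (fun u : ℝ => -(w/(x:ℂ)) * (w - (u:ℂ)*(x:ℂ))⁻¹)
          (-w * ((w - (u:ℂ)*(x:ℂ))^2)⁻¹) u := by
      intro u _
      have h1 : HasDerivAt (fun u : ℝ => ((u : ℂ))) 1 u := by
        simpa using (hasDerivAt_id u).ofReal_comp
      have h2 : HasDerivAt (fun u : ℝ => w - (u:ℂ)*(x:ℂ)) (-(x:ℂ)) u := by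
        exact ((hasDerivAt_const u w).sub (h1.mul_const (x:ℂ))).congr_deriv (by ring)
      have h3 := (hasDerivAt_inv (hne u)).comp u h2
      have h4 := h3.const_mul (-(w/(x:ℂ)))
      refine h4.congr_deriv (Eq.symm ?_)
      have hx1 : (x:ℂ)/(x:ℂ) = 1 := div_self hxC
      calc -w * ((w - (u:ℂ)*(x:ℂ))^2)⁻¹
          = -w * ((w - (u:ℂ)*(x:ℂ))^2)⁻¹ * ((x:ℂ)/(x:ℂ)) := by rw [hx1, mul_one]
        _ = -(w/(x:ℂ)) * (-((w - (u:ℂ)*(x:ℂ))^2)⁻¹ * -(x:ℂ)) := by ring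
    have hcont : Continuous (fun u : ℝ => -w * ((w - (u:ℂ)*(x:ℂ))^2)⁻¹) := by
      apply continuous_const.mul
      apply Continuous.inv₀
      · fun_prop
      · intro u; exact pow_ne_zero _ (hne u)
    have hInt : IntervalIntegrable (fun u : ℝ => -w * ((w - (u:ℂ)*(x:ℂ))^2)⁻¹) volume 0 1 :=
      hcont.intervalIntegrable 0 1
    rw [← integral_Ioc_eq_integral_Ioo, ← intervalIntegral.integral_of_le zero_le_one,
      intervalIntegral.integral_eq_sub_of_hasDerivAt key hInt]
    push_cast
    field_simp
    ring_nf
    rw [show w ^ 2 * w⁻¹ = w by field_simp, show w * (x:ℂ) * w⁻¹ = (x:ℂ) by field_simp]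
    ring

lemma integrable_inv_sub (μ : Measure ℝ) [IsProbabilityMeasure μ] {z : ℂ} (hz : 0 < z.im) :
    Integrable (fun x : ℝ => (z - (x:ℂ))⁻¹) μ := by
  refine (integrable_const ((z.im)⁻¹)).mono' ?_ ?_
  · exact ((measurable_const.sub Complex.measurable_ofReal).inv).aestronglyMeasurable
  · refine Filter.Eventually.of_forall fun x => ?_
    rw [norm_inv]
    exact inv_anti₀ hz (aux_norm hz x)

lemma deriv_cauchy (μ : Measure ℝ) [IsProbabilityMeasure μ] {z : ℂ} (hz : 0 < z.im) :
    HasDerivAt (fun w : ℂ => ∫ x : ℝ, (w - (x:ℂ))⁻¹ ∂μ)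
      (∫ x : ℝ, -(((z - (x:ℂ))^2)⁻¹) ∂μ) z := by
  set ε := z.im / 2 with hε
  have hε0 : 0 < ε := by positivity
  have hball : ∀ w ∈ Metric.ball z ε, ε ≤ w.im := by
    intro w hw
    have h1 : |(w - z).im| ≤ ‖w - z‖ := by
      exact Complex.abs_im_le_norm _
    have h2 : ‖w - z‖ < ε := by rwa [← dist_eq_norm, ← Metric.mem_ball]
    have h3 : |w.im - z.im| < ε := by
      rw [← Complex.sub_im]; exact lt_of_le_of_lt h1 h2
    have := abs_lt.mp h3
    rw [hε] at *
    linarith [this.1]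
  have key := hasDerivAt_integral_of_dominated_loc_of_deriv_le
    (F := fun (w : ℂ) (x : ℝ) => (w - (x:ℂ))⁻¹)
    (F' := fun (w : ℂ) (x : ℝ) => -(((w - (x:ℂ))^2)⁻¹))
    (x₀ := z) (bound := fun _ => (ε^2)⁻¹) (μ := μ) (Metric.ball_mem_nhds z hε0)
    ?_ ?_ ?_ ?_ ?_ ?_
  · exact key.2
  · exact Filter.Eventually.of_forall fun w =>
      ((measurable_const.sub Complex.measurable_ofReal).inv).aestronglyMeasurable
  · exact integrable_inv_sub μ hz
  · exact (((measurable_const.sub Complex.measurable_ofReal).pow_const 2).inv.neg).aestronglyMeasurable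
  · refine Filter.Eventually.of_forall fun x => fun w hw => ?_
    have hwim : 0 < w.im := lt_of_lt_of_le hε0 (hball w hw)
    rw [norm_neg, norm_inv, norm_pow]
    have h4 : ε ≤ ‖w - (x:ℂ)‖ := le_trans (hball w hw) (aux_norm hwim x)
    have h5 : ε^2 ≤ ‖w - (x:ℂ)‖^2 := pow_le_pow_left₀ hε0.le h4 2
    exact inv_anti₀ (by positivity) h5
  · exact integrable_const _
  · refine Filter.Eventually.of_forall fun x => fun w hw => ?_
    have hwim : 0 < w.im := lt_of_lt_of_le hε0 (hball w hw)
    have h6 : HasDerivAt (fun w : ℂ => w - (x:ℂ)) 1 w := (hasDerivAt_id w).sub_const _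
    have h7 := h6.inv (aux_ne hwim x)
    refine h7.congr_deriv ?_
    rw [neg_div, one_div]

/-- If `μ` is the law of `U·X + c`, where `U` is uniform on `(0,1)` and independent
of the real random variable `X`, then `Im ((z - c)·G_μ'(z)) ≥ 0` for every `z` in
the upper half-plane, where `G_μ` is the Cauchy transform of `μ`. -/
theorem unimodal_cauchy_deriv {Ω : Type*} [MeasureSpace Ω]
    [IsProbabilityMeasure (ℙ : Measure Ω)]
    (U X : Ω → ℝ) (hUmeas : Measurable U) (hXmeas : Measurable X)
    (hU : Measure.map U ℙ = volume.restrict (Set.Ioo (0 : ℝ) 1))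
    (hindep : IndepFun U X ℙ)
    (c : ℝ) (μ : Measure ℝ) (hμ : μ = Measure.map (fun ω => U ω * X ω + c) ℙ)
    (z : ℂ) (hz : 0 < z.im) :
    0 ≤ ((z - (c : ℂ)) * deriv (fun w : ℂ => ∫ x : ℝ, (w - (x : ℂ))⁻¹ ∂μ) z).im := by
  subst hμ
  have hT : Measurable (fun ω => U ω * X ω + c) := (hUmeas.mul hXmeas).add_const c
  haveI hprob : IsProbabilityMeasure (Measure.map (fun ω => U ω * X ω + c) ℙ) :=
    Measure.isProbabilityMeasure_map hT.aemeasurable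
  set w : ℂ := z - (c:ℂ) with hwdef
  have hwim : 0 < w.im := by
    rw [hwdef, Complex.sub_im, Complex.ofReal_im, sub_zero]; exact hz
  have hderiv := deriv_cauchy (Measure.map (fun ω => U ω * X ω + c) ℙ) hz
  rw [hderiv.deriv]
  have hmeasF' : AEStronglyMeasurable (fun x : ℝ => -(((z - (x:ℂ))^2)⁻¹))
      (Measure.map (fun ω => U ω * X ω + c) ℙ) :=
    (((measurable_const.sub Complex.measurable_ofReal).pow_const 2).inv.neg).aestronglyMeasurable
  have h2 : (∫ x : ℝ, -(((z - (x:ℂ))^2)⁻¹) ∂(Measure.map (fun ω => U ω * X ω + c) ℙ))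
      = ∫ ω, -(((w - ((U ω * X ω : ℝ):ℂ))^2)⁻¹) ∂ℙ := by
    rw [integral_map hT.aemeasurable hmeasF']
    congr 1
    ext ω
    congr 3
    rw [hwdef]
    push_cast
    ring
  rw [h2]
  have h3 : w * ∫ ω, -(((w - ((U ω * X ω : ℝ):ℂ))^2)⁻¹) ∂ℙ
      = ∫ ω, -w * (((w - ((U ω * X ω : ℝ):ℂ))^2)⁻¹) ∂ℙ := by
    rw [← integral_const_mul]
    congr 1
    ext ω
    ring
  rw [h3]
  set ν : Measure ℝ := Measure.map X ℙ with hν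
  haveI : IsProbabilityMeasure ν := Measure.isProbabilityMeasure_map hXmeas.aemeasurable
  have hjoint : Measure.map (fun ω => (U ω, X ω)) ℙ
      = (volume.restrict (Set.Ioo (0:ℝ) 1)).prod ν := by
    rw [← hU]
    exact (indepFun_iff_map_prod_eq_prod_map_map hUmeas.aemeasurable hXmeas.aemeasurable).mp hindep
  haveI : IsFiniteMeasure (volume.restrict (Set.Ioo (0:ℝ) 1)) := by
    constructor
    simp [Real.volume_Ioo]
  have hFmeas : Measurable (fun p : ℝ × ℝ => -w * ((w - ((p.1 : ℂ) * (p.2:ℂ)))^2)⁻¹) := by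
    apply measurable_const.mul
    apply Measurable.inv
    apply Measurable.pow_const
    exact measurable_const.sub
      ((Complex.measurable_ofReal.comp measurable_fst).mul
        (Complex.measurable_ofReal.comp measurable_snd))
  have hFbdd : Integrable (fun p : ℝ × ℝ => -w * ((w - ((p.1 : ℂ) * (p.2:ℂ)))^2)⁻¹)
      ((volume.restrict (Set.Ioo (0:ℝ) 1)).prod ν) := by
    refine (integrable_const (‖w‖ * ((w.im)^2)⁻¹)).mono' hFmeas.aestronglyMeasurable ?_
    refine Filter.Eventually.of_forall fun p => ?_
    rw [norm_mul, norm_neg, norm_inv, norm_pow]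
    have h6 : w.im ≤ ‖w - ((p.1 : ℂ) * (p.2:ℂ))‖ := by
      have := aux_norm hwim (p.1 * p.2)
      push_cast at this
      exact this
    have h7 : w.im^2 ≤ ‖w - ((p.1 : ℂ) * (p.2:ℂ))‖^2 := pow_le_pow_left₀ hwim.le h6 2
    exact mul_le_mul_of_nonneg_left (inv_anti₀ (by positivity) h7) (norm_nonneg w)
  have h4 : (∫ ω, -w * (((w - ((U ω * X ω : ℝ):ℂ))^2)⁻¹) ∂ℙ)
      = ∫ p : ℝ × ℝ, -w * ((w - ((p.1 : ℂ) * (p.2:ℂ)))^2)⁻¹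
          ∂((volume.restrict (Set.Ioo (0:ℝ) 1)).prod ν) := by
    rw [← hjoint, integral_map (hUmeas.prodMk hXmeas).aemeasurable hFmeas.aestronglyMeasurable]
    congr 1
    ext ω
    push_cast
    ring_nf
  have hchain : (∫ ω, -w * (((w - ((U ω * X ω : ℝ):ℂ))^2)⁻¹) ∂ℙ)
      = ∫ x : ℝ, -(w - (x:ℂ))⁻¹ ∂ν := by
    rw [h4, integral_prod_symm _ hFbdd]
    refine integral_congr_ae (Filter.Eventually.of_forall fun y => ?_)
    simpa using inner_int hwim y
  rw [hchain]
  have hintν : Integrable (fun x : ℝ => -(w - (x:ℂ))⁻¹) ν := (integrable_inv_sub ν hwim).neg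
  have him : (∫ x, -(w - (x:ℂ))⁻¹ ∂ν).im = ∫ x, (-(w - (x:ℂ))⁻¹).im ∂ν :=
    (Complex.imCLM.integral_comp_comm hintν).symm
  rw [him]
  refine integral_nonneg fun x => ?_
  simp only [neg_im, Complex.inv_im, Complex.sub_im, Complex.ofReal_im, sub_zero, neg_neg,
    neg_div]
  exact div_nonneg hwim.le (Complex.normSq_nonneg _)
end

section
/- Let μ be a Borel probability measure on the unit circle 𝕋 with nonzero first moment, and suppose that for every c ∈ (0,1) there exists a probability measure ν_c on 𝕋 with (1−c)·Haar + c·μ = μ ↻ ν_c, where ↻ is multiplicative monotone convolution (η_{α ↻ β} = η_α ∘ η_β) and Haar is the normalized arc-length measure. Then c·ψ_μ(𝔻) ⊆ ψ_μ(𝔻) for all c ∈ (0,1), where ψ_μ(z) = ∫ (xz)/(1−xz) dμ(x) is the moment generating function on the unit disk 𝔻. -/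
open MeasureTheory Complex Metric Set

/-- The moment generating function `ψ_μ(z) = ∫ xz/(1-xz) dμ(x)` of a measure on
the unit circle, defined on the open unit disk. -/
noncomputable def psiT (μ : MeasureTheory.Measure (Metric.sphere (0 : ℂ) 1)) (z : ℂ) : ℂ :=
  ∫ x : Metric.sphere (0 : ℂ) 1, (x : ℂ) * z / (1 - (x : ℂ) * z) ∂μ

/-- The `η`-transform `η_μ = ψ_μ/(1 + ψ_μ)` of a measure on the unit circle. -/
noncomputable def etaT (μ : MeasureTheory.Measure (Metric.sphere (0 : ℂ) 1)) (z : ℂ) : ℂ :=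
  psiT μ z / (1 + psiT μ z)

lemma one_sub_ne' {x : Metric.sphere (0:ℂ) 1} {z : ℂ} (hz : z ∈ ball (0:ℂ) 1) :
    1 - (x:ℂ) * z ≠ 0 := by
  have hx : ‖(x:ℂ)‖ = 1 := by
    have := x.2
    simpa using this
  intro h
  have : (x:ℂ) * z = 1 := by linear_combination -h
  have : ‖(x:ℂ)*z‖ = 1 := by rw [this]; simp
  rw [norm_mul, hx, one_mul] at this
  simp [mem_ball, Complex.dist_eq] at hz
  rw [this] at hz; linarith

lemma re_psiT_gt (μ : Measure (Metric.sphere (0:ℂ) 1)) [IsProbabilityMeasure μ]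
    {z : ℂ} (hz : z ∈ ball (0:ℂ) 1) : -1/2 < (psiT μ z).re := by
  have hz' : ‖z‖ < 1 := by simpa [mem_ball, Complex.dist_eq] using hz
  set m : ℝ := -1/2 + (1 - ‖z‖^2)/(2*(1+‖z‖)^2) with hm
  have hcont : Continuous (fun x : Metric.sphere (0:ℂ) 1 => (x:ℂ) * z / (1 - (x:ℂ)*z)) := by
    apply Continuous.div
    · exact continuous_subtype_val.mul continuous_const
    · exact continuous_const.sub (continuous_subtype_val.mul continuous_const)
    · intro x; exact one_sub_ne' hz
  have hint : Integrable (fun x : Metric.sphere (0:ℂ) 1 => (x:ℂ) * z / (1 - (x:ℂ)*z)) μ :=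
    hcont.integrable_of_hasCompactSupport (HasCompactSupport.of_compactSpace _)
  have hre : ∀ x : Metric.sphere (0:ℂ) 1, m ≤ ((x:ℂ) * z / (1 - (x:ℂ)*z)).re := by
    intro x
    set u : ℂ := (x:ℂ) * z with hu
    have hne : 1 - u ≠ 0 := one_sub_ne' hz
    have hx : ‖(x:ℂ)‖ = 1 := by simpa using x.2
    have habs : ‖u‖ = ‖z‖ := by rw [hu, norm_mul, hx, one_mul]
    have hrecalc : (u / (1-u)).re = (u.re - Complex.normSq u)/Complex.normSq (1-u) := by
      rw [Complex.div_re]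
      simp [Complex.normSq_apply]
      ring
    rw [hrecalc]
    have hn1 : Complex.normSq (1-u) ≤ (1 + ‖z‖)^2 := by
      have h1 : ‖1-u‖ ≤ 1 + ‖z‖ := by
        calc ‖1-u‖ ≤ ‖(1:ℂ)‖ + ‖u‖ := by
              simpa [sub_eq_add_neg] using (norm_add_le (1:ℂ) (-u))
          _ = 1 + ‖z‖ := by rw [habs]; simp
      rw [← Complex.sq_norm]
      nlinarith [norm_nonneg (1-u)]
    have hn0 : 0 < Complex.normSq (1-u) := by
      rw [Complex.normSq_pos]; exact hne
    have hnu : Complex.normSq u = ‖z‖ ^2 := by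
      rw [← Complex.sq_norm, habs]
    have key : (u.re - Complex.normSq u)/Complex.normSq (1-u) + 1/2
        = (1 - Complex.normSq u)/(2 * Complex.normSq (1-u)) := by
      have hns : Complex.normSq (1-u) = 1 - 2*u.re + Complex.normSq u := by
        simp [Complex.normSq_apply]; ring
      field_simp
      nlinarith [hns]
    have hpos : (1 - ‖z‖^2)/(2*(1+‖z‖)^2) ≤
        (1 - Complex.normSq u)/(2 * Complex.normSq (1-u)) := by
      rw [hnu]
      apply div_le_div_of_nonneg_left
      · nlinarith [norm_nonneg z]
      · linarith
      · nlinarith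
    rw [hm]; linarith [key ▸ hpos]
  have hmono : m ≤ (psiT μ z).re := by
    have h2 := integral_re hint
    simp only [RCLike.re_to_complex] at h2
    rw [psiT, ← h2]
    calc m = ∫ _ : Metric.sphere (0:ℂ) 1, m ∂μ := by simp
      _ ≤ _ := by
        apply integral_mono (integrable_const m) ?_ (fun x => hre x)
        simpa using hint.re
  have hm2 : -1/2 < m := by
    rw [hm]
    have : 0 < (1 - ‖z‖^2)/(2*(1+‖z‖)^2) := by
      apply div_pos
      · nlinarith [norm_nonneg z]
      · nlinarith [norm_nonneg z]
    linarith
  exact lt_of_lt_of_le hm2 hmono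

lemma etaT_mem_ball (ν : Measure (Metric.sphere (0:ℂ) 1)) [IsProbabilityMeasure ν]
    {z : ℂ} (hz : z ∈ ball (0:ℂ) 1) : etaT ν z ∈ ball (0:ℂ) 1 := by
  have h := re_psiT_gt ν hz
  set p := psiT ν z with hp
  have hlt : ‖p‖ < ‖1+p‖ := by
    rw [Complex.norm_def, Complex.norm_def]
    apply Real.sqrt_lt_sqrt (Complex.normSq_nonneg _)
    simp only [Complex.normSq_apply, Complex.add_re, Complex.add_im, Complex.one_re,
      Complex.one_im]
    nlinarith
  have h0 : 0 < ‖1+p‖ := lt_of_le_of_lt (norm_nonneg p) hlt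
  simp only [etaT, ← hp, mem_ball, Complex.dist_eq, sub_zero]
  rw [norm_div]
  exact (div_lt_one h0).mpr hlt


/-- If `μ` is a probability measure on the unit circle with nonzero first moment
such that for every `c ∈ (0,1)` there is a probability measure `ν_c` with
`(1-c)·Haar + c·μ = μ ↻ ν_c` — a measure identity that, on the level of
transforms, reads `η_{(1-c)·Haar + c·μ} = η_μ ∘ η_{ν_c}`, i.e.
`cψ_μ(z)/(1 + cψ_μ(z)) = η_μ(η_{ν_c}(z))` on the unit disk (since
`ψ_{(1-c)·Haar + c·μ} = c·ψ_μ`) — then `c·ψ_μ(𝔻) ⊆ ψ_μ(𝔻)` for all `c ∈ (0,1)`. -/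
theorem typeH_implies_starlike (μ : Measure (Metric.sphere (0 : ℂ) 1))
    [IsProbabilityMeasure μ]
    (hm : (∫ x : Metric.sphere (0 : ℂ) 1, (x : ℂ) ∂μ) ≠ 0)
    (hH : ∀ c : ℝ, c ∈ Set.Ioo (0 : ℝ) 1 →
      ∃ ν : Measure (Metric.sphere (0 : ℂ) 1), IsProbabilityMeasure ν ∧
        ∀ z ∈ Metric.ball (0 : ℂ) 1,
          (c : ℂ) * psiT μ z / (1 + (c : ℂ) * psiT μ z) = etaT μ (etaT ν z)) :
    ∀ c : ℝ, c ∈ Set.Ioo (0 : ℝ) 1 → ∀ z ∈ Metric.ball (0 : ℂ) 1,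
      ∃ w ∈ Metric.ball (0 : ℂ) 1, (c : ℂ) * psiT μ z = psiT μ w := by
  intro c hc z hz
  obtain ⟨ν, hν, hid⟩ := hH c hc
  haveI := hν
  set w := etaT ν z with hwdef
  have hw : w ∈ ball (0:ℂ) 1 := etaT_mem_ball ν hz
  refine ⟨w, hw, ?_⟩
  have h := hid z hz
  rw [show etaT μ (etaT ν z) = psiT μ w / (1 + psiT μ w) from rfl] at h
  have hd1 : (1:ℂ) + (c:ℂ) * psiT μ z ≠ 0 := by
    intro h0
    have h1 : ((1:ℂ) + (c:ℂ) * psiT μ z).re = 0 := by rw [h0]; simp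
    simp only [Complex.add_re, Complex.one_re, Complex.mul_re, Complex.ofReal_re,
      Complex.ofReal_im, zero_mul, sub_zero] at h1
    nlinarith [re_psiT_gt μ hz, hc.1, hc.2]
  have hd2 : (1:ℂ) + psiT μ w ≠ 0 := by
    intro h0
    have h1 : ((1:ℂ) + psiT μ w).re = 0 := by rw [h0]; simp
    simp only [Complex.add_re, Complex.one_re] at h1
    nlinarith [re_psiT_gt μ hw]
  field_simp at h
  linear_combination h
end
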